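/- arXiv:2404.00841 — 2 statements merged into one kernel-verified Lean document; each statement's English description precedes it below -/
import Mathlib

section
/- Let w₀ → ⋯ → w_t be a semi-computation with reduced history H, where w₀ = x₁^{δ₁} x₂^{δ₂} x₃^{δ₃} is a reduced word with x_i ∈ 𝒜₁ and δ_i ∈ {±1}. Then there exist u₀, u₁, u₂, u₃ ∈ F(ℬ) such that: (1) w_t = u₀ x₁^{δ₁} u₁ x₂^{δ₂} u₂ x₃^{δ₃} u₃; (2) ‖u₀‖, ‖u₃‖ ≤ D·t; (3) (1/2)·D·t ≤ ‖u₁‖ + ‖u₂‖ ≤ 3·D·t; (4) the pair (u₁, u₂) uniquely determines H: if w₀ → ⋯ → w'_{t'} is any semi-computation with reduced history H' starting from the same w₀ and w'_{t'} = u₀'' x₁^{δ₁} u₁ x₂^{δ₂} u₂ x₃^{δ₃} u₃'' for some u₀'', u₃'' ∈ F(ℬ), then H' = H. -/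
/-- The alphabet `𝒜₁ ⊔ ℬ` (also used as the index set `𝒜 ⊔ ℬ`): `Sum.inl a` is the
letter `a₁ ∈ 𝒜₁` (resp. the index `a ∈ 𝒜`), and `Sum.inr i` encodes `b₁, b₂ ∈ ℬ`. -/
abbrev MLetter (n : ℕ) := Sum (Fin n) (Fin 2)

/-- `D = 4n(n+2)`. -/
def Dconst (n : ℕ) : ℕ := 4 * n * (n + 2)

/-- `b₁`. -/
def bb1 (n : ℕ) : FreeGroup (MLetter n) := FreeGroup.of (Sum.inr 0)

/-- `b₂`. -/
def bb2 (n : ℕ) : FreeGroup (MLetter n) := FreeGroup.of (Sum.inr 1)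

/-- `k = η(y,a)`, normalized to lie in `{1, …, n(n+2) = D/4}`. -/
def kVal (n : ℕ) (η : MLetter n × Fin n ≃ Fin (n * (n + 2))) (y : MLetter n) (a : Fin n) :
    ℕ :=
  (η (y, a)).val + 1

/-- `v(y,a) = b₁^k (b₂b₁)^{(D-2k)/2} b₂^k`, a reduced word of length `D` in `F(ℬ)`. -/
def vWord (n : ℕ) (η : MLetter n × Fin n ≃ Fin (n * (n + 2))) (y : MLetter n) (a : Fin n) :
    FreeGroup (MLetter n) :=
  bb1 n ^ kVal n η y a * (bb2 n * bb1 n) ^ (2 * n * (n + 2) - kVal n η y a) *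
    bb2 n ^ kVal n η y a

/-- `w^ε` for a sign `ε : Bool` (`true ↦ w`, `false ↦ w⁻¹`). -/
def bpow {α : Type*} (w : FreeGroup α) (ε : Bool) : FreeGroup α := if ε then w else w⁻¹

/-- The letter map of the automorphism `φ_y^{ε}`. -/
def phiAux (n : ℕ) (η : MLetter n × Fin n ≃ Fin (n * (n + 2))) (y : MLetter n) (ε : Bool) :
    MLetter n → FreeGroup (MLetter n)
  | Sum.inl a => bpow (vWord n η y a) ε * FreeGroup.of (Sum.inl a)
  | Sum.inr i => FreeGroup.of (Sum.inr i)

/-- The automorphism `φ_y^{ε}` of `F(𝒜₁ ⊔ ℬ)`: it fixes `ℬ` pointwise and sends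
`a₁ ↦ v(y,a) a₁` (for `ε = +1`), resp. `a₁ ↦ v(y,a)⁻¹ a₁` (for `ε = -1`). -/
def phiM (n : ℕ) (η : MLetter n × Fin n ≃ Fin (n * (n + 2))) (y : MLetter n) (ε : Bool) :
    FreeGroup (MLetter n) →* FreeGroup (MLetter n) :=
  FreeGroup.lift (phiAux n η y ε)

/-- The map `ρ_y^{ε}`: `ρ_y^{+1}(w) = φ_y(w)·y⁻¹` (with `y` read as the letter `a₁`
when `y = a ∈ 𝒜`), `ρ_{b_i}^{-1}(w) = φ_{b_i}^{-1}(w)·b_i`, and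
`ρ_a^{-1}(w) = φ_a^{-1}(w)·v(a,a)⁻¹a₁`. -/
def rhoM (n : ℕ) (η : MLetter n × Fin n ≃ Fin (n * (n + 2))) (y : MLetter n) (ε : Bool)
    (w : FreeGroup (MLetter n)) : FreeGroup (MLetter n) :=
  if ε then phiM n η y true w * (FreeGroup.of y)⁻¹
  else
    match y with
    | Sum.inl a =>
        phiM n η (Sum.inl a) false w * (vWord n η (Sum.inl a) a)⁻¹ *
          FreeGroup.of (Sum.inl a)
    | Sum.inr i => phiM n η (Sum.inr i) false w * FreeGroup.of (Sum.inr i)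

/-- `‖w‖`: the length of the reduced word of `w`. -/
def rlen (n : ℕ) (w : FreeGroup (MLetter n)) : ℕ := (FreeGroup.toWord w).length

/-- `|w|_𝒜`: the number of `𝒜₁^{±1}`-letters in the reduced word of `w`. -/
def aCount (n : ℕ) (w : FreeGroup (MLetter n)) : ℕ :=
  ((FreeGroup.toWord w).filter fun p => p.1.isLeft).length

/-- The `𝒜`-projection `δ(w)`: delete the `ℬ^{±1}`-letters of the reduced word of `w`
and replace each `a₁^{±1}` by `a^{±1}`. -/
def aProj (n : ℕ) (w : FreeGroup (MLetter n)) : List (Fin n × Bool) :=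
  (FreeGroup.toWord w).filterMap fun p =>
    Sum.elim (fun a => some (a, p.2)) (fun _ => none) p.1

/-- `w ∈ F(ℬ)`. -/
def IsBWord (n : ℕ) (w : FreeGroup (MLetter n)) : Prop :=
  ∀ p ∈ FreeGroup.toWord w, (p.1).isRight = true

/-- The product `u₀ x₁^{δ₁} u₁ x₂^{δ₂} ⋯ u_{k-1} x_k^{δ_k} u_k`
(with `0`-based indexing of `u`, `x`, `d`). -/
def wordProd (n : ℕ) (k : ℕ) (u : ℕ → FreeGroup (MLetter n)) (x : ℕ → Fin n)
    (d : ℕ → Bool) : FreeGroup (MLetter n) :=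
  ((List.range k).map fun i => u i * bpow (FreeGroup.of (Sum.inl (x i))) (d i)).prod * u k

/-- A computation: `w_{i+1} = ρ_{y_i}^{ε_i}(w_i)` for all `i < t`. -/
def IsComputation (n : ℕ) (η : MLetter n × Fin n ≃ Fin (n * (n + 2))) (t : ℕ)
    (y : ℕ → MLetter n) (e : ℕ → Bool) (w : ℕ → FreeGroup (MLetter n)) : Prop :=
  ∀ i < t, w (i + 1) = rhoM n η (y i) (e i) (w i)

/-- A semi-computation: `w_{i+1} = φ_{y_i}^{ε_i}(w_i)` for all `i < t`. -/
def IsSemiComputation (n : ℕ) (η : MLetter n × Fin n ≃ Fin (n * (n + 2))) (t : ℕ)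
    (y : ℕ → MLetter n) (e : ℕ → Bool) (w : ℕ → FreeGroup (MLetter n)) : Prop :=
  ∀ i < t, w (i + 1) = phiM n η (y i) (e i) (w i)

/-- The history `y₁^{ε₁} ⋯ y_t^{ε_t}` is a reduced word: there is no `i` with
`y_{i+1} = y_i` and `ε_{i+1} = -ε_i`. -/
def ReducedHistory (n : ℕ) (t : ℕ) (y : ℕ → MLetter n) (e : ℕ → Bool) : Prop :=
  ∀ i, i + 1 < t → ¬(y (i + 1) = y i ∧ e (i + 1) = !e i)

/-- A rear shift of `w 0`: a computation with reduced history such that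
`|w₀|_𝒜 = ⋯ = |w_{t-1}|_𝒜 = |w_t|_𝒜 + 1`. -/
def IsRearShift (n : ℕ) (η : MLetter n × Fin n ≃ Fin (n * (n + 2))) (t : ℕ)
    (y : ℕ → MLetter n) (e : ℕ → Bool) (w : ℕ → FreeGroup (MLetter n)) : Prop :=
  1 ≤ t ∧ IsComputation n η t y e w ∧ ReducedHistory n t y e ∧
    ∀ i < t, aCount n (w i) = aCount n (w t) + 1

/-- A shift of `w 0`: a computation with reduced history ending at the empty word. -/
def IsShift (n : ℕ) (η : MLetter n × Fin n ≃ Fin (n * (n + 2))) (t : ℕ)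
    (y : ℕ → MLetter n) (e : ℕ → Bool) (w : ℕ → FreeGroup (MLetter n)) : Prop :=
  IsComputation n η t y e w ∧ ReducedHistory n t y e ∧ w t = 1

/-- A reduced word is cyclically reduced if its first letter is not the inverse
of its last letter. -/
def CyclicallyReducedWord {α : Type*} (l : List (α × Bool)) : Prop :=
  ∀ a ∈ l.head?, ∀ b ∈ l.getLast?, a ≠ (b.1, !b.2)


namespace SC

open List

/-- `funList`: list given by a function on `range N`. -/
def fL {α : Type*} (N : ℕ) (f : ℕ → α) : List α := (List.range N).map f

variable {α : Type*}

@[simp] lemma fL_length (N : ℕ) (f : ℕ → α) : (fL N f).length = N := by simp [fL]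

lemma fL_getElem? (N : ℕ) (f : ℕ → α) (i : ℕ) :
    (fL N f)[i]? = if i < N then some (f i) else none := by
  by_cases h : i < N
  · simp [fL, List.getElem?_map, List.getElem?_range h, h]
  · rw [List.getElem?_eq_none (by simp; omega), if_neg h]

lemma fL_getElem {N i : ℕ} (f : ℕ → α) (h : i < N) :
    (fL N f)[i]'((fL_length N f).symm ▸ h) = f i := by
  simp [fL]

lemma fL_zero (f : ℕ → α) : fL 0 f = [] := rfl

lemma fL_succ (N : ℕ) (f : ℕ → α) : fL (N + 1) f = fL N f ++ [f N] := by
  simp [fL, List.range_succ]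

lemma fL_congr {N M : ℕ} {f g : ℕ → α} (hN : N = M) (h : ∀ i < N, f i = g i) :
    fL N f = fL M g := by
  subst hN
  apply List.ext_getElem?
  intro i
  rw [fL_getElem?, fL_getElem?]
  by_cases hi : i < N
  · rw [if_pos hi, if_pos hi, h i hi]
  · rw [if_neg hi, if_neg hi]

lemma fL_app (a b : ℕ) (f g : ℕ → α) :
    fL a f ++ fL b g = fL (a + b) (fun i => if i < a then f i else g (i - a)) := by
  apply List.ext_getElem?
  intro i
  rw [List.getElem?_append, fL_length, fL_getElem?, fL_getElem?, fL_getElem?]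
  split_ifs <;> first | rfl | omega

lemma fL_take {j N : ℕ} (h : j ≤ N) (f : ℕ → α) : (fL N f).take j = fL j f := by
  apply List.ext_getElem?
  intro i
  rw [List.getElem?_take, fL_getElem?, fL_getElem?]
  split_ifs <;> first | rfl | omega

lemma fL_drop (j N : ℕ) (f : ℕ → α) :
    (fL N f).drop j = fL (N - j) (fun i => f (j + i)) := by
  apply List.ext_getElem?
  intro i
  rw [List.getElem?_drop, fL_getElem?, fL_getElem?]
  split_ifs <;> first | rfl | omega

lemma fL_head? {N : ℕ} (h : 0 < N) (f : ℕ → α) : (fL N f).head? = some (f 0) := by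
  rw [List.head?_eq_getElem?, fL_getElem?, if_pos h]

lemma fL_getLast? {N : ℕ} (h : 0 < N) (f : ℕ → α) :
    (fL N f).getLast? = some (f (N - 1)) := by
  rw [List.getLast?_eq_getElem?, fL_length, fL_getElem?, if_pos (by omega)]

lemma fL_chain' {R : α → α → Prop} {N : ℕ} {f : ℕ → α} :
    List.Chain' R (fL N f) ↔ ∀ i, i + 1 < N → R (f i) (f (i + 1)) := by
  rw [List.Chain', List.isChain_iff_getElem]
  simp only [fL_length, List.get_eq_getElem]
  constructor
  · intro H i hi
    have h2 := H i (by omega)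
    rwa [fL_getElem f (by omega), fL_getElem f (by omega)] at h2
  · intro H i hi
    rw [fL_getElem f (by omega), fL_getElem f (by omega)]
    exact H i (by omega)

lemma fL_mem {N : ℕ} {f : ℕ → α} {z : α} (h : z ∈ fL N f) : ∃ i, i < N ∧ z = f i := by
  simp only [fL, List.mem_map, List.mem_range] at h
  obtain ⟨i, hi, rfl⟩ := h
  exact ⟨i, hi, rfl⟩

lemma fL_invRev (N : ℕ) (f : ℕ → α × Bool) :
    FreeGroup.invRev (fL N f) = fL N (fun i => ((f (N - 1 - i)).1, !(f (N - 1 - i)).2)) := by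
  apply List.ext_getElem?
  intro i
  unfold FreeGroup.invRev
  by_cases h : i < N
  · rw [List.getElem?_reverse (by simp [h]), fL_getElem?, if_pos h]
    simp only [List.length_map, fL_length, List.getElem?_map, fL_getElem?]
    rw [if_pos (show N - 1 - i < N by omega)]
    rfl
  · rw [List.getElem?_eq_none (by simp; omega), fL_getElem?, if_neg h]

/-- Reduced words in the sense of `FreeGroup.reduce`. -/
def RW (l : List (α × Bool)) : Prop :=
  l.Chain' fun a b => ¬(a.1 = b.1 ∧ a.2 = !b.2)

theorem reduce_eq_self [DecidableEq α] {l : List (α × Bool)} (h : RW l) :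
    FreeGroup.reduce l = l := by
  induction l with
  | nil => rfl
  | cons x l ih =>
    have hl : RW l := (List.isChain_cons.mp h).2
    rw [FreeGroup.reduce.cons, ih hl]
    cases l with
    | nil => rfl
    | cons b t =>
      have hx : ¬(x.1 = b.1 ∧ x.2 = !b.2) := (List.isChain_cons_cons.mp h).1
      simp [hx]

theorem toWord_mk_of_RW [DecidableEq α] {l : List (α × Bool)} (h : RW l) :
    (FreeGroup.mk l).toWord = l := by
  rw [FreeGroup.toWord_mk, reduce_eq_self h]

lemma mk_replicate [DecidableEq α] (k : ℕ) (x : α) :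
    FreeGroup.mk (List.replicate k (x, true)) = FreeGroup.of x ^ k := by
  conv_rhs => rw [← FreeGroup.mk_toWord (x := FreeGroup.of x ^ k)]
  rw [FreeGroup.toWord_of_pow]

lemma replicate_eq_fL (k : ℕ) (x : α) : List.replicate k x = fL k (fun _ => x) := by
  apply List.ext_getElem?
  intro i
  rw [List.getElem?_replicate, fL_getElem?]

end SC
namespace SC

open List FreeGroup

variable (n : ℕ) (η : MLetter n × Fin n ≃ Fin (n * (n + 2)))

/-- v-letters: a pair `(y,a)` together with a sign. -/
abbrev VL := (MLetter n × Fin n) × Bool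

/-- `Q = n(n+2) = D/4`. -/
def Qc : ℕ := n * (n + 2)

def kOf (q : MLetter n × Fin n) : ℕ := kVal n η q.1 q.2

lemma kOf_pos (q : MLetter n × Fin n) : 1 ≤ kOf n η q :=
  Nat.succ_le_succ (Nat.zero_le _)

lemma kOf_le (q : MLetter n × Fin n) : kOf n η q ≤ Qc n := (η (q.1, q.2)).isLt

lemma kOf_inj {q q' : MLetter n × Fin n} (h : kOf n η q = kOf n η q') : q = q' := by
  have h2 : η (q.1, q.2) = η (q'.1, q'.2) := Fin.ext (Nat.succ_injective h)
  have := η.injective h2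
  rw [Prod.mk.eta, Prod.mk.eta] at this
  exact this

def r0 : MLetter n := Sum.inr 0
def r1 : MLetter n := Sum.inr 1

lemma r0_ne_r1 : r0 n ≠ r1 n := by
  simp only [r0, r1, ne_eq, Sum.inr.injEq]
  decide

def wdF : VL n → ℕ → MLetter n × Bool
  | (q, true), i =>
      if i < kOf n η q then (r0 n, true)
      else if i < 4 * Qc n - kOf n η q then
        (if (i - kOf n η q) % 2 = 0 then (r1 n, true) else (r0 n, true))
      else (r1 n, true)
  | (q, false), i =>
      if i < kOf n η q then (r1 n, false)
      else if i < 4 * Qc n - kOf n η q then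
        (if (i - kOf n η q) % 2 = 0 then (r0 n, false) else (r1 n, false))
      else (r0 n, false)

lemma wdF_t_lo {q i} (h : i < kOf n η q) : wdF n η (q, true) i = (r0 n, true) := by
  simp only [wdF]
  rw [if_pos h]

lemma wdF_t_mid {q i} (h1 : kOf n η q ≤ i) (h2 : i < 4 * Qc n - kOf n η q) :
    wdF n η (q, true) i =
      (if (i - kOf n η q) % 2 = 0 then (r1 n, true) else (r0 n, true)) := by
  simp only [wdF]
  rw [if_neg (by omega), if_pos h2]

lemma wdF_t_hi {q i} (h : 4 * Qc n - kOf n η q ≤ i) (hk : 2 * kOf n η q ≤ 4 * Qc n) :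
    wdF n η (q, true) i = (r1 n, true) := by
  simp only [wdF]
  rw [if_neg (by omega), if_neg (by omega)]

lemma wdF_f_lo {q i} (h : i < kOf n η q) : wdF n η (q, false) i = (r1 n, false) := by
  simp only [wdF]
  rw [if_pos h]

lemma wdF_f_mid {q i} (h1 : kOf n η q ≤ i) (h2 : i < 4 * Qc n - kOf n η q) :
    wdF n η (q, false) i =
      (if (i - kOf n η q) % 2 = 0 then (r0 n, false) else (r1 n, false)) := by
  simp only [wdF]
  rw [if_neg (by omega), if_pos h2]

lemma wdF_f_hi {q i} (h : 4 * Qc n - kOf n η q ≤ i) (hk : 2 * kOf n η q ≤ 4 * Qc n) :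
    wdF n η (q, false) i = (r0 n, false) := by
  simp only [wdF]
  rw [if_neg (by omega), if_neg (by omega)]

lemma wdF_snd (p : VL n) (i : ℕ) : (wdF n η p i).2 = p.2 := by
  obtain ⟨q, ε⟩ := p
  cases ε <;>
    · show (if _ then _ else if _ then _ else _ : MLetter n × Bool).2 = _
      split_ifs <;> rfl

lemma wdF_fst_isRight (p : VL n) (i : ℕ) : (wdF n η p i).1.isRight = true := by
  obtain ⟨q, ε⟩ := p
  cases ε <;>
    · show (if _ then _ else if _ then _ else _ : MLetter n × Bool).1.isRight = true
      split_ifs <;> rfl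

/-- The word `v(y,a)^ε` as an explicit list of letters. -/
def wd (p : VL n) : List (MLetter n × Bool) := fL (4 * Qc n) (wdF n η p)

lemma wd_length (p : VL n) : (wd n η p).length = 4 * Qc n := fL_length _ _

lemma mid_mk (m : ℕ) :
    FreeGroup.mk (fL (2 * m)
        (fun i => if i % 2 = 0 then (r1 n, true) else (r0 n, true))) =
      (bb2 n * bb1 n) ^ m := by
  induction m with
  | zero => rw [pow_zero, show 2 * 0 = 0 from rfl, fL_zero, ← FreeGroup.one_eq_mk]
  | succ m ih =>
    have hb2 : bb2 n = FreeGroup.mk [(r1 n, true)] := rfl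
    have hb1 : bb1 n = FreeGroup.mk [(r0 n, true)] := rfl
    rw [show 2 * (m + 1) = (2 * m + 1) + 1 from by omega, fL_succ, fL_succ]
    beta_reduce
    rw [if_pos (show (2 * m) % 2 = 0 by omega), if_neg (show ¬(2 * m + 1) % 2 = 0 by omega)]
    rw [← FreeGroup.mul_mk, ← FreeGroup.mul_mk, ih, pow_succ, hb2, hb1, mul_assoc]

lemma mkwd_true (q : MLetter n × Fin n) :
    FreeGroup.mk (wd n η (q, true)) = vWord n η q.1 q.2 := by
  have hk1 := kOf_pos n η q
  have hkQ := kOf_le n η q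
  have hsplit : wd n η (q, true) = List.replicate (kOf n η q) (r0 n, true) ++
      ((fL (2 * (2 * Qc n - kOf n η q))
          (fun i => if i % 2 = 0 then (r1 n, true) else (r0 n, true))) ++
        List.replicate (kOf n η q) (r1 n, true)) := by
    rw [replicate_eq_fL, replicate_eq_fL, fL_app, fL_app]
    apply fL_congr (by omega)
    intro i hi
    beta_reduce
    by_cases h1 : i < kOf n η q
    · rw [if_pos h1, wdF_t_lo n η h1]
    · rw [if_neg h1]
      by_cases h2 : i - kOf n η q < 2 * (2 * Qc n - kOf n η q)
      · rw [if_pos h2, wdF_t_mid n η (by omega) (by omega)]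
      · rw [if_neg h2, wdF_t_hi n η (by omega) (by omega)]
  rw [hsplit, ← FreeGroup.mul_mk, ← FreeGroup.mul_mk, mk_replicate, mk_replicate, mid_mk]
  rw [vWord, (show 2 * n * (n + 2) = 2 * Qc n from mul_assoc 2 n (n + 2))]
  show FreeGroup.of (r0 n) ^ _ * (_ * FreeGroup.of (r1 n) ^ _) = _
  rw [show FreeGroup.of (r0 n) = bb1 n from rfl, show FreeGroup.of (r1 n) = bb2 n from rfl,
    mul_assoc]
  rfl

lemma wd_false_eq_invRev (q : MLetter n × Fin n) :
    wd n η (q, false) = FreeGroup.invRev (wd n η (q, true)) := by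
  have hk1 := kOf_pos n η q
  have hkQ := kOf_le n η q
  rw [wd, wd, fL_invRev]
  apply fL_congr rfl
  intro i hi
  beta_reduce
  set k := kOf n η q with hkdef
  have hj : 4 * Qc n - 1 - i < 4 * Qc n := by omega
  by_cases h1 : i < k
  · rw [wdF_f_lo n η h1, wdF_t_hi n η (by omega) (by omega)]
    rfl
  · by_cases h2 : i < 4 * Qc n - k
    · rw [wdF_f_mid n η (by omega) (by omega), wdF_t_mid n η (by omega) (by omega)]
      split_ifs with ha hb hb <;> first | rfl | (exfalso; omega)
    · rw [wdF_f_hi n η (by omega) (by omega), wdF_t_lo n η (by omega)]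
      rfl

lemma mkwd_false (q : MLetter n × Fin n) :
    FreeGroup.mk (wd n η (q, false)) = (vWord n η q.1 q.2)⁻¹ := by
  rw [wd_false_eq_invRev, ← FreeGroup.inv_mk, mkwd_true]

/-- The group element of a v-letter. -/
def gp (p : VL n) : FreeGroup (MLetter n) := bpow (vWord n η p.1.1 p.1.2) p.2

lemma mkwd (p : VL n) : FreeGroup.mk (wd n η p) = gp n η p := by
  obtain ⟨q, ε⟩ := p
  cases ε
  · rw [mkwd_false]; rfl
  · rw [mkwd_true]; rfl

/-- Cancellation amount at the junction of two v-letters. -/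
def cjn (p q : VL n) : ℕ := if p.2 = q.2 then 0 else min (kOf n η p.1) (kOf n η q.1)

lemma cjn_le (p q : VL n) : cjn n η p q ≤ Qc n := by
  rw [cjn]
  split_ifs
  · exact Nat.zero_le _
  · exact le_trans (Nat.min_le_left _ _) (kOf_le n η _)

/-- The reduced word of the product of v-letters `p :: L`. -/
def Mw : VL n → List (VL n) → List (MLetter n × Bool)
  | p, [] => wd n η p
  | p, q :: L => (wd n η p).take (4 * Qc n - cjn n η p q) ++ (Mw q L).drop (cjn n η p q)

/-- The reduced word of the product of a list of v-letters. -/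
def NL : List (VL n) → List (MLetter n × Bool)
  | [] => []
  | p :: L => Mw n η p L

def ProdL (L : List (VL n)) : FreeGroup (MLetter n) := (L.map (gp n η)).prod

/-- Reducedness of a sequence of v-letters. -/
def RedV : List (VL n) → Prop := List.Chain' (fun p q => ¬(q.1 = p.1 ∧ q.2 = !p.2))

lemma redv_k_ne {p q : VL n} (h : ¬(q.1 = p.1 ∧ q.2 = !p.2)) (hs : p.2 ≠ q.2) :
    kOf n η p.1 ≠ kOf n η q.1 := by
  intro hk
  exact h ⟨(kOf_inj n η hk).symm, by
    cases hp : p.2 <;> cases hq : q.2 <;> simp_all⟩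

end SC
namespace SC

open List FreeGroup

variable (n : ℕ) (η : MLetter n × Fin n ≃ Fin (n * (n + 2)))

lemma Qc_ge (hn : 0 < n) : 3 ≤ Qc n := by
  have : 1 * (1 + 2) ≤ n * (n + 2) := Nat.mul_le_mul hn (by omega)
  simpa [Qc] using this

theorem Mw_spec (hn : 0 < n) :
    ∀ (L : List (VL n)) (p : VL n), RedV n (p :: L) →
      ((Mw n η p L).take (3 * Qc n) = (wd n η p).take (3 * Qc n)) ∧
      RW (Mw n η p L) ∧
      FreeGroup.mk (wd n η p) * ProdL n η L = FreeGroup.mk (Mw n η p L) ∧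
      (4 * Qc n + 2 * Qc n * L.length ≤ (Mw n η p L).length ∧
        (Mw n η p L).length ≤ 4 * Qc n * (L.length + 1)) ∧
      ∀ z ∈ Mw n η p L, z.1.isRight = true := by
  have hQ : 3 ≤ Qc n := Qc_ge n hn
  intro L
  induction L with
  | nil =>
    intro p _
    refine ⟨rfl, ?_, ?_, ?_, ?_⟩
    · rw [RW, Mw, wd, fL_chain']
      rintro i hi ⟨h1, h2⟩
      rw [wdF_snd, wdF_snd] at h2
      simp at h2
    · rw [ProdL, List.map_nil, List.prod_nil, mul_one, Mw]
    · rw [Mw, wd_length]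
      constructor <;> simp
    · intro z hz
      rw [Mw] at hz
      obtain ⟨i, hi, rfl⟩ := fL_mem hz
      exact wdF_fst_isRight n η p i
  | cons q L ih =>
    intro p hred
    obtain ⟨hpq, hred'⟩ := List.isChain_cons_cons.mp hred
    obtain ⟨ihtake, ihRW, ihmk, ⟨ihlen1, ihlen2⟩, ihmem⟩ := ih q hred'
    set c := cjn n η p q with hc
    have hMw : Mw n η p (q :: L) =
        (wd n η p).take (4 * Qc n - c) ++ (Mw n η q L).drop c := rfl
    have hcQ : c ≤ Qc n := cjn_le n η p q
    have hkp1 := kOf_pos n η p.1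
    have hkpQ := kOf_le n η p.1
    have hkq1 := kOf_pos n η q.1
    have hkqQ := kOf_le n η q.1
    have hlenM : 4 * Qc n ≤ (Mw n η q L).length := le_trans (by omega) ihlen1
    have hA : (wd n η p).take (4 * Qc n - c) = fL (4 * Qc n - c) (wdF n η p) :=
      fL_take (by omega) _
    have hgetMw : ∀ j, j < 3 * Qc n → (Mw n η q L)[j]? = some (wdF n η q j) := by
      intro j hj
      have h1 : ((Mw n η q L).take (3 * Qc n))[j]? = (Mw n η q L)[j]? := by
        rw [List.getElem?_take, if_pos hj]
      rw [← h1, ihtake, List.getElem?_take, if_pos hj, wd, fL_getElem?,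
        if_pos (by omega)]
    have hcz : p.2 = q.2 → c = 0 := fun h => by rw [hc, cjn, if_pos h]
    have hcs : p.2 ≠ q.2 → c = min (kOf n η p.1) (kOf n η q.1) := fun h => by
      rw [hc, cjn, if_neg h]
    clear_value c
    have hkne : p.2 ≠ q.2 → kOf n η p.1 ≠ kOf n η q.1 := redv_k_ne n η hpq
    have hjunc : ¬((wdF n η p (4 * Qc n - c - 1)).1 = (wdF n η q c).1 ∧
        (wdF n η p (4 * Qc n - c - 1)).2 = !(wdF n η q c).2) := by
      by_cases hs : p.2 = q.2
      · rintro ⟨-, h2⟩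
        rw [wdF_snd, wdF_snd, hs] at h2
        simp at h2
      · have hcval := hcs hs
        have hkk := hkne hs
        obtain ⟨qp, εp⟩ := p
        obtain ⟨qq, εq⟩ := q
        dsimp only at hcval hkk hs hkp1 hkpQ hkq1 hkqQ ⊢
        rcases Nat.lt_or_ge (kOf n η qp) (kOf n η qq) with hlt | hge
        · have hcv : c = kOf n η qp := by omega
          cases εp
          · have hq2 : εq = true := by
              cases εq
              · exact absurd rfl hs
              · rfl
            subst hq2
            rw [wdF_f_mid n η (by omega) (by omega), wdF_t_lo n η (by omega),
              if_neg (by omega)]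
            rintro ⟨h1, -⟩
            exact r0_ne_r1 n h1.symm
          · have hq2 : εq = false := by
              cases εq
              · rfl
              · exact absurd rfl hs
            subst hq2
            rw [wdF_t_mid n η (by omega) (by omega), wdF_f_lo n η (by omega),
              if_neg (by omega)]
            rintro ⟨h1, -⟩
            exact r0_ne_r1 n h1
        · have hlt' : kOf n η qq < kOf n η qp := by omega
          have hcv : c = kOf n η qq := by omega
          cases εp
          · have hq2 : εq = true := by
              cases εq
              · exact absurd rfl hs
              · rfl
            subst hq2
            rw [wdF_f_hi n η (by omega) (by omega), wdF_t_mid n η (by omega) (by omega),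
              if_pos (by omega)]
            rintro ⟨h1, -⟩
            exact r0_ne_r1 n h1
          · have hq2 : εq = false := by
              cases εq
              · rfl
              · exact absurd rfl hs
            subst hq2
            rw [wdF_t_hi n η (by omega) (by omega), wdF_f_mid n η (by omega) (by omega),
              if_pos (by omega)]
            rintro ⟨h1, -⟩
            exact r0_ne_r1 n h1.symm
    have hBhead : ((Mw n η q L).drop c).head? = some (wdF n η q c) := by
      rw [List.head?_eq_getElem?, List.getElem?_drop]
      simpa using hgetMw c (by omega)
    have hAlast : ((wd n η p).take (4 * Qc n - c)).getLast? =
        some (wdF n η p (4 * Qc n - c - 1)) := by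
      rw [hA, fL_getLast? (by omega)]
    refine ⟨?_, ?_, ?_, ?_, ?_⟩
    · -- take 3Q
      rw [hMw]
      apply List.ext_getElem?
      intro i
      rw [List.getElem?_take, List.getElem?_take]
      by_cases hi : i < 3 * Qc n
      · rw [if_pos hi, if_pos hi, List.getElem?_append, List.length_take, wd_length,
          if_pos (by omega), List.getElem?_take, if_pos (by omega)]
      · rw [if_neg hi, if_neg hi]
    · -- RW
      rw [RW, hMw, List.Chain', List.isChain_append]
      refine ⟨?_, ?_, ?_⟩
      · rw [hA]; apply fL_chain'.mpr
        rintro i hi ⟨h1, h2⟩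
        rw [wdF_snd, wdF_snd] at h2
        simp at h2
      · exact List.IsChain.suffix ihRW (List.drop_suffix _ _)
      · intro x hx z hz
        rw [hAlast] at hx
        rw [hBhead] at hz
        have hx' : x = wdF n η p (4 * Qc n - c - 1) := by simpa using hx.symm
        have hz' : z = wdF n η q c := by simpa using hz.symm
        rw [hx', hz']
        exact hjunc
    · -- group identity
      have hT : (Mw n η q L).take c = fL c (wdF n η q) := by
        have h1 : (Mw n η q L).take c = ((Mw n η q L).take (3 * Qc n)).take c := by
          rw [List.take_take, min_eq_left (by omega)]
        rw [h1, ihtake, List.take_take, min_eq_left (by omega), wd, fL_take (by omega)]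
      have hS : (wd n η p).drop (4 * Qc n - c) = FreeGroup.invRev ((Mw n η q L).take c) := by
        rw [hT, fL_invRev, wd, fL_drop]
        apply fL_congr (by omega)
        intro i hi
        beta_reduce
        have hs : p.2 ≠ q.2 := by
          intro h
          have h0 : c = 0 := hcz h
          exfalso
          omega
        have hcval := hcs hs
        have hkk := hkne hs
        obtain ⟨qp, εp⟩ := p
        obtain ⟨qq, εq⟩ := q
        dsimp only at hcval hkk hs hkp1 hkpQ hkq1 hkqQ ⊢
        cases εp
        · have hq2 : εq = true := by
            cases εq
            · exact absurd rfl hs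
            · rfl
          subst hq2
          rw [wdF_f_hi n η (by omega) (by omega), wdF_t_lo n η (by omega)]
          rfl
        · have hq2 : εq = false := by
            cases εq
            · rfl
            · exact absurd rfl hs
          subst hq2
          rw [wdF_t_hi n η (by omega) (by omega), wdF_f_lo n η (by omega)]
          rfl
      have step1 : ProdL n η (q :: L) = FreeGroup.mk (wd n η q) * ProdL n η L := by
        rw [ProdL, List.map_cons, List.prod_cons, mkwd, ProdL]
      rw [step1, ihmk]
      conv_lhs => rw [← List.take_append_drop (4 * Qc n - c) (wd n η p),
        ← List.take_append_drop c (Mw n η q L)]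
      rw [← FreeGroup.mul_mk, ← FreeGroup.mul_mk, hS, ← FreeGroup.inv_mk,
        mul_assoc, inv_mul_cancel_left, FreeGroup.mul_mk, hMw]
    · -- lengths
      rw [hMw, List.length_append, List.length_take, List.length_drop, wd_length,
        List.length_cons]
      have e1 : 2 * Qc n * (L.length + 1) = 2 * Qc n * L.length + 2 * Qc n := by ring
      have e2 : 4 * Qc n * (L.length + 1 + 1) = 4 * Qc n * (L.length + 1) + 4 * Qc n := by
        ring
      omega
    · -- membership
      intro z hz
      rw [hMw] at hz
      rcases List.mem_append.mp hz with h | h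
      · obtain ⟨i, hi, rfl⟩ := fL_mem (hA ▸ h)
        exact wdF_fst_isRight n η p i
      · exact ihmem z (List.mem_of_mem_drop h)

end SC
namespace SC

open List FreeGroup

variable (n : ℕ) (η : MLetter n × Fin n ≃ Fin (n * (n + 2)))

lemma RedV_tail {p : VL n} {L} (h : RedV n (p :: L)) : RedV n L :=
  (List.isChain_cons.mp h).2

lemma ProdL_nil : ProdL n η [] = 1 := by rw [ProdL, List.map_nil, List.prod_nil]

lemma ProdL_cons (p : VL n) (L) : ProdL n η (p :: L) = gp n η p * ProdL n η L := by
  rw [ProdL, List.map_cons, List.prod_cons, ProdL]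

lemma ProdL_append (A B : List (VL n)) :
    ProdL n η (A ++ B) = ProdL n η A * ProdL n η B := by
  rw [ProdL, List.map_append, List.prod_append, ProdL, ProdL]

lemma ProdL_mk (hn : 0 < n) {L : List (VL n)} (h : RedV n L) :
    ProdL n η L = FreeGroup.mk (NL n η L) := by
  cases L with
  | nil => rw [ProdL_nil, NL, ← FreeGroup.one_eq_mk]
  | cons p L =>
    rw [ProdL_cons, ← mkwd, NL]
    exact (Mw_spec n η hn L p h).2.2.1

lemma RW_NL (hn : 0 < n) {L : List (VL n)} (h : RedV n L) : RW (NL n η L) := by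
  cases L with
  | nil => exact List.isChain_nil
  | cons p L => exact (Mw_spec n η hn L p h).2.1

lemma toWord_ProdL (hn : 0 < n) {L : List (VL n)} (h : RedV n L) :
    (ProdL n η L).toWord = NL n η L := by
  rw [ProdL_mk n η hn h, toWord_mk_of_RW (RW_NL n η hn h)]

lemma NL_len_ge (hn : 0 < n) {L : List (VL n)} (h : RedV n L) :
    2 * Qc n * L.length ≤ (NL n η L).length := by
  cases L with
  | nil => simp [NL]
  | cons p L =>
    have h1 := ((Mw_spec n η hn L p h).2.2.2.1).1
    rw [NL, List.length_cons]
    have e1 : 2 * Qc n * (L.length + 1) = 2 * Qc n * L.length + 2 * Qc n := by ring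
    have hQ := Qc_ge n hn
    have : 2 * Qc n * L.length ≤ 4 * Qc n + 2 * Qc n * L.length := by omega
    omega

lemma NL_len_le (hn : 0 < n) {L : List (VL n)} (h : RedV n L) :
    (NL n η L).length ≤ 4 * Qc n * L.length := by
  cases L with
  | nil => simp [NL]
  | cons p L =>
    have h1 := ((Mw_spec n η hn L p h).2.2.2.1).2
    rw [NL, List.length_cons]
    have e1 : 4 * Qc n * (L.length + 1) = 4 * Qc n * L.length + 4 * Qc n := by ring
    omega

lemma NL_mem (hn : 0 < n) {L : List (VL n)} (h : RedV n L) :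
    ∀ z ∈ NL n η L, z.1.isRight = true := by
  cases L with
  | nil => intro z hz; exact absurd hz List.not_mem_nil
  | cons p L => exact (Mw_spec n η hn L p h).2.2.2.2

lemma Mw_decode (hn : 0 < n) {p p' : VL n} {L L'} (h : RedV n (p :: L))
    (h' : RedV n (p' :: L')) (heq : Mw n η p L = Mw n η p' L') : p = p' := by
  have hQ := Qc_ge n hn
  have t1 := (Mw_spec n η hn L p h).1
  have t2 := (Mw_spec n η hn L' p' h').1
  have htake : (wd n η p).take (3 * Qc n) = (wd n η p').take (3 * Qc n) := by
    rw [← t1, heq, t2]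
  have hpt : ∀ i, i < 3 * Qc n → wdF n η p i = wdF n η p' i := by
    intro i hi
    have h2 := congrArg (fun l => l[i]?) htake
    simp only [List.getElem?_take, if_pos hi, wd, fL_getElem?,
      if_pos (show i < 4 * Qc n by omega), Option.some.injEq] at h2
    exact h2
  obtain ⟨qp, εp⟩ := p
  obtain ⟨qq, εq⟩ := p'
  have hkp1 := kOf_pos n η qp
  have hkpQ := kOf_le n η qp
  have hkq1 := kOf_pos n η qq
  have hkqQ := kOf_le n η qq
  have hsgn : εp = εq := by
    have h3 := congrArg Prod.snd (hpt 0 (by omega))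
    rwa [wdF_snd, wdF_snd] at h3
  subst hsgn
  have hk : kOf n η qp = kOf n η qq := by
    by_contra hne
    rcases Nat.lt_or_ge (kOf n η qp) (kOf n η qq) with hlt | hge
    · have h4 := congrArg Prod.fst (hpt (kOf n η qp) (by omega))
      cases εp
      · rw [wdF_f_mid n η (by omega) (by omega), wdF_f_lo n η (by omega),
          if_pos (by omega)] at h4
        exact r0_ne_r1 n h4
      · rw [wdF_t_mid n η (by omega) (by omega), wdF_t_lo n η (by omega),
          if_pos (by omega)] at h4
        exact r0_ne_r1 n h4.symm
    · have hlt' : kOf n η qq < kOf n η qp := by omega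
      have h4 := congrArg Prod.fst (hpt (kOf n η qq) (by omega))
      cases εp
      · rw [wdF_f_lo n η (by omega), wdF_f_mid n η (by omega) (by omega),
          if_pos (by omega)] at h4
        exact r0_ne_r1 n h4.symm
      · rw [wdF_t_lo n η (by omega), wdF_t_mid n η (by omega) (by omega),
          if_pos (by omega)] at h4
        exact r0_ne_r1 n h4
  rw [kOf_inj n η hk]

theorem ProdL_inj (hn : 0 < n) : ∀ {L L' : List (VL n)}, RedV n L → RedV n L' →
    ProdL n η L = ProdL n η L' → L = L' := by
  have hQ := Qc_ge n hn
  intro L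
  induction L with
  | nil =>
    intro L' h h' heq
    cases L' with
    | nil => rfl
    | cons p' M' =>
      exfalso
      have e2 := toWord_ProdL n η hn h'
      rw [← heq, ProdL_nil, FreeGroup.toWord_one] at e2
      have hlen := (Mw_spec n η hn M' p' h').2.2.2.1.1
      rw [NL] at e2
      rw [← e2] at hlen
      simp at hlen
      omega
  | cons p M ih =>
    intro L' h h' heq
    cases L' with
    | nil =>
      exfalso
      have e2 := toWord_ProdL n η hn h
      rw [heq, ProdL_nil, FreeGroup.toWord_one] at e2
      have hlen := (Mw_spec n η hn M p h).2.2.2.1.1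
      rw [NL] at e2
      rw [← e2] at hlen
      simp at hlen
      omega
    | cons p' M' =>
      have hW : Mw n η p M = Mw n η p' M' := by
        have e1 := toWord_ProdL n η hn h
        have e2 := toWord_ProdL n η hn h'
        rw [heq] at e1
        rw [e2] at e1
        rw [NL, NL] at e1
        exact e1.symm
      have hp := Mw_decode n η hn h h' hW
      subst hp
      have hMq : ProdL n η M = ProdL n η M' := by
        have g1 := (Mw_spec n η hn M p h).2.2.1
        have g2 := (Mw_spec n η hn M' p h').2.2.1
        rw [hW] at g1
        exact mul_left_cancel (g1.trans g2.symm)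
      rw [ih (RedV_tail n h) (RedV_tail n h') hMq]

end SC
namespace SC

open List FreeGroup

variable (n : ℕ) (η : MLetter n × Fin n ≃ Fin (n * (n + 2)))

/-- The list of v-letters `((y i, x), e i)`, `i < t`. -/
def LxL (y : ℕ → MLetter n) (e : ℕ → Bool) (x : Fin n) (t : ℕ) : List (VL n) :=
  fL t (fun i => ((y i, x), e i))

@[simp] lemma LxL_length (y e x t) : (LxL n y e x t).length = t := fL_length _ _

lemma LxL_zero (y e x) : LxL n y e x 0 = [] := rfl

lemma LxL_succ (y e x i) :
    LxL n y e x (i + 1) = LxL n y e x i ++ [((y i, x), e i)] := fL_succ _ _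

lemma RedV_LxL {t y e} (hh : ReducedHistory n t y e) (x : Fin n) :
    RedV n (LxL n y e x t) := by
  rw [RedV, LxL, fL_chain']
  rintro i hi ⟨h1, h2⟩
  refine hh i hi ⟨?_, h2⟩
  simpa using congrArg Prod.fst h1

lemma RedV_invRev {L : List (VL n)} (h : RedV n L) : RedV n (FreeGroup.invRev L) := by
  rw [RedV, FreeGroup.invRev, List.Chain', List.isChain_reverse, List.isChain_map]
  refine List.IsChain.imp ?_ h
  rintro a b hab ⟨h1, h2⟩
  simp only [Bool.not_not] at h2
  exact hab ⟨h1.symm, h2.symm⟩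

lemma gp_flip (p : VL n) : gp n η (p.1, !p.2) = (gp n η p)⁻¹ := by
  obtain ⟨q, ε⟩ := p
  cases ε <;> simp [gp, bpow]

lemma ProdL_invRev (L : List (VL n)) :
    ProdL n η (FreeGroup.invRev L) = (ProdL n η L)⁻¹ := by
  induction L with
  | nil => simp [ProdL_nil, FreeGroup.invRev]
  | cons p L ih =>
    have h1 : FreeGroup.invRev (p :: L) = FreeGroup.invRev L ++ [(p.1, !p.2)] := by
      rw [FreeGroup.invRev, FreeGroup.invRev, List.map_cons, List.reverse_cons]
    rw [h1, ProdL_append, ih, ProdL_cons, ProdL_nil, mul_one, gp_flip, ProdL_cons,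
      mul_inv_rev]

lemma invRev_LxL (y e x t) :
    FreeGroup.invRev (LxL n y e x t) =
      fL t (fun i => ((y (t - 1 - i), x), !e (t - 1 - i))) := by
  rw [LxL, fL_invRev]

/-- Reducedness of `(Lx x)⁻¹ ++ Lx x'` for `x ≠ x'`. -/
lemma RedV_inv_append {t y e} (hh : ReducedHistory n t y e) {x x' : Fin n}
    (hne : x' ≠ x) :
    RedV n (FreeGroup.invRev (LxL n y e x t) ++ LxL n y e x' t) := by
  rw [RedV, List.Chain', List.isChain_append]
  refine ⟨RedV_invRev n (RedV_LxL n hh x), RedV_LxL n hh x', ?_⟩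
  intro a ha b hb
  cases t with
  | zero => simp [LxL_zero, FreeGroup.invRev] at ha
  | succ s =>
    rw [invRev_LxL, fL_getLast? (Nat.succ_pos s)] at ha
    rw [LxL, fL_head? (Nat.succ_pos s)] at hb
    simp only [Option.mem_def, Option.some.injEq] at ha hb
    rw [← ha, ← hb]
    rintro ⟨h1, -⟩
    exact hne (by simpa using congrArg Prod.snd h1)

/-- `φ` fixes `ℬ`-letters. -/
lemma phiM_bb1 (z ε) : phiM n η z ε (bb1 n) = bb1 n := by
  rw [bb1, phiM, FreeGroup.lift_apply_of]
  rfl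

lemma phiM_bb2 (z ε) : phiM n η z ε (bb2 n) = bb2 n := by
  rw [bb2, phiM, FreeGroup.lift_apply_of]
  rfl

lemma phiM_vWord (z ε y a) : phiM n η z ε (vWord n η y a) = vWord n η y a := by
  rw [vWord]
  simp only [_root_.map_mul, _root_.map_pow, phiM_bb1, phiM_bb2]

lemma phiM_gp (z ε p) : phiM n η z ε (gp n η p) = gp n η p := by
  obtain ⟨q, δ⟩ := p
  cases δ <;> simp [gp, bpow, phiM_vWord, _root_.map_inv]

lemma phiM_ProdL (z ε L) : phiM n η z ε (ProdL n η L) = ProdL n η L := by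
  induction L with
  | nil => rw [ProdL_nil, _root_.map_one]
  | cons p L ih => rw [ProdL_cons, _root_.map_mul, ih, phiM_gp]

lemma phiM_ofA (z ε a) :
    phiM n η z ε (FreeGroup.of (Sum.inl a)) =
      bpow (vWord n η z a) ε * FreeGroup.of (Sum.inl a) := by
  rw [phiM, FreeGroup.lift_apply_of]
  rfl

/-- The per-letter accumulated factor. -/
def Ff (y : ℕ → MLetter n) (e : ℕ → Bool) (i : ℕ) (x : Fin n) : Bool → FreeGroup (MLetter n)
  | true => ProdL n η (LxL n y e x i) * FreeGroup.of (Sum.inl x)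
  | false => (FreeGroup.of (Sum.inl x))⁻¹ * (ProdL n η (LxL n y e x i))⁻¹

lemma Ff_zero (y e x δ) : Ff n η y e 0 x δ = bpow (FreeGroup.of (Sum.inl x)) δ := by
  cases δ <;> simp [Ff, LxL_zero, ProdL_nil, bpow]

lemma phiM_Ff (y : ℕ → MLetter n) (e : ℕ → Bool) (i : ℕ) (x : Fin n) (δ : Bool) :
    phiM n η (y i) (e i) (Ff n η y e i x δ) = Ff n η y e (i + 1) x δ := by
  have hP : ProdL n η (LxL n y e x (i + 1)) =
      ProdL n η (LxL n y e x i) * bpow (vWord n η (y i) x) (e i) := by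
    rw [LxL_succ, ProdL_append, ProdL_cons, ProdL_nil, mul_one]
    rfl
  cases δ
  · show phiM n η (y i) (e i) ((FreeGroup.of (Sum.inl x))⁻¹ * _⁻¹) = _
    rw [_root_.map_mul, _root_.map_inv, _root_.map_inv, phiM_ProdL, phiM_ofA]
    show _ = (FreeGroup.of (Sum.inl x))⁻¹ * (ProdL n η (LxL n y e x (i + 1)))⁻¹
    rw [hP]
    group
  · show phiM n η (y i) (e i) (_ * FreeGroup.of (Sum.inl x)) = _
    rw [_root_.map_mul, phiM_ProdL, phiM_ofA]
    show _ = ProdL n η (LxL n y e x (i + 1)) * FreeGroup.of (Sum.inl x)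
    rw [hP]
    group

lemma dec_aux {t : ℕ} {y : ℕ → MLetter n} {e : ℕ → Bool} {w : ℕ → FreeGroup (MLetter n)}
    (hsemi : IsSemiComputation n η t y e w)
    {x₁ x₂ x₃ : Fin n} {d₁ d₂ d₃ : Bool}
    (h0 : w 0 = bpow (FreeGroup.of (Sum.inl x₁)) d₁ * bpow (FreeGroup.of (Sum.inl x₂)) d₂ *
      bpow (FreeGroup.of (Sum.inl x₃)) d₃) :
    ∀ i, i ≤ t →
      w i = Ff n η y e i x₁ d₁ * Ff n η y e i x₂ d₂ * Ff n η y e i x₃ d₃ := by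
  intro i
  induction i with
  | zero =>
    intro _
    rw [h0, Ff_zero, Ff_zero, Ff_zero]
  | succ i ih =>
    intro hit
    rw [hsemi i (by omega), ih (by omega), _root_.map_mul, _root_.map_mul, phiM_Ff,
      phiM_Ff, phiM_Ff]

lemma rlen_ProdL (hn : 0 < n) {L : List (VL n)} (h : RedV n L) :
    rlen n (ProdL n η L) = (NL n η L).length := by
  rw [rlen, toWord_ProdL n η hn h]

lemma IsBWord_ProdL (hn : 0 < n) {L : List (VL n)} (h : RedV n L) :
    IsBWord n (ProdL n η L) := by
  intro p hp
  rw [toWord_ProdL n η hn h] at hp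
  exact NL_mem n η hn h p hp

/-- `RW` for the reduced word of any element. -/
lemma RW_toWord (u : FreeGroup (MLetter n)) : RW u.toWord := by
  rw [RW, List.Chain', List.isChain_iff_getElem]
  intro i hi
  intro hcon
  obtain ⟨h1, h2⟩ := hcon
  have hiL : i + 1 < u.toWord.length := by omega
  have hdec : u.toWord = u.toWord.take i ++
      u.toWord[i] :: u.toWord[i + 1] :: u.toWord.drop (i + 2) := by
    conv_lhs => rw [← List.take_append_drop i u.toWord]
    congr 1
    rw [List.drop_eq_getElem_cons (by omega)]
    congr 1
    rw [List.drop_eq_getElem_cons (by omega)]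
  have hb : u.toWord[i + 1] = (u.toWord[i].1, !u.toWord[i].2) := by
    have h2' : u.toWord[i + 1].2 = !u.toWord[i].2 := by rw [h2, Bool.not_not]
    exact Prod.ext h1.symm h2'
  rw [hb] at hdec
  exact FreeGroup.reduce.not ((FreeGroup.reduce_toWord u).trans hdec)

end SC
namespace SC

open List FreeGroup

variable (n : ℕ) (η : MLetter n × Fin n ≃ Fin (n * (n + 2)))

lemma bpow_mk (x : MLetter n) (δ : Bool) :
    bpow (FreeGroup.of x) δ = FreeGroup.mk [(x, δ)] := by
  cases δ
  · show (FreeGroup.of x)⁻¹ = _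
    rw [show FreeGroup.of x = FreeGroup.mk [(x, true)] from rfl, FreeGroup.inv_mk]
    rfl
  · rfl

/-- The concatenated word `l0 x₁^{d₁} l1 x₂^{d₂} l2 x₃^{d₃} l3`. -/
def W3 (x₁ x₂ x₃ : Fin n) (d₁ d₂ d₃ : Bool) (l0 l1 l2 l3 : List (MLetter n × Bool)) :
    List (MLetter n × Bool) :=
  l0 ++ (Sum.inl x₁, d₁) :: (l1 ++ (Sum.inl x₂, d₂) :: (l2 ++ (Sum.inl x₃, d₃) :: l3))

lemma mk_W3 (x₁ x₂ x₃ : Fin n) (d₁ d₂ d₃ : Bool) (u0 u1 u2 u3 : FreeGroup (MLetter n)) :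
    u0 * bpow (FreeGroup.of (Sum.inl x₁)) d₁ * u1 * bpow (FreeGroup.of (Sum.inl x₂)) d₂ *
        u2 * bpow (FreeGroup.of (Sum.inl x₃)) d₃ * u3 =
      FreeGroup.mk (W3 n x₁ x₂ x₃ d₁ d₂ d₃ u0.toWord u1.toWord u2.toWord u3.toWord) := by
  conv_lhs => rw [← FreeGroup.mk_toWord (x := u0), ← FreeGroup.mk_toWord (x := u1),
    ← FreeGroup.mk_toWord (x := u2), ← FreeGroup.mk_toWord (x := u3)]
  rw [bpow_mk, bpow_mk, bpow_mk, FreeGroup.mul_mk, FreeGroup.mul_mk, FreeGroup.mul_mk,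
    FreeGroup.mul_mk, FreeGroup.mul_mk, FreeGroup.mul_mk]
  apply congrArg
  simp [W3, List.append_assoc]

lemma RW_append_cons {l : List (MLetter n × Bool)} {c : MLetter n × Bool} {r}
    (hl : RW l) (hB : ∀ z ∈ l, z.1.isRight = true) (hc : c.1.isRight = false)
    (hr : RW (c :: r)) : RW (l ++ c :: r) := by
  rw [RW, List.Chain', List.isChain_append]
  refine ⟨hl, hr, ?_⟩
  intro a ha b hb
  have hb' : c = b := by simpa using hb
  rintro ⟨h1, -⟩
  have haM : a ∈ l := by
    obtain ⟨hne, hEq⟩ := List.mem_getLast?_eq_getLast ha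
    rw [hEq]
    exact List.getLast_mem hne
  have h2 := hB a haM
  rw [h1, ← hb'] at h2
  rw [h2] at hc
  simp at hc

/-- `RW` of the sandwich word. -/
lemma RW_W3 {x₁ x₂ x₃ : Fin n} {d₁ d₂ d₃ : Bool} {l0 l1 l2 l3 : List (MLetter n × Bool)}
    (h0 : RW l0) (h1 : RW l1) (h2 : RW l2) (h3 : RW l3)
    (hB0 : ∀ z ∈ l0, z.1.isRight = true) (hB1 : ∀ z ∈ l1, z.1.isRight = true)
    (hB2 : ∀ z ∈ l2, z.1.isRight = true) (hB3 : ∀ z ∈ l3, z.1.isRight = true)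
    (hnc12 : ¬(x₂ = x₁ ∧ d₂ = !d₁)) (hnc23 : ¬(x₃ = x₂ ∧ d₃ = !d₂)) :
    RW (W3 n x₁ x₂ x₃ d₁ d₂ d₃ l0 l1 l2 l3) := by
  have key : ∀ (x : Fin n) (δ : Bool) (x' : Fin n) (δ' : Bool)
      (l r : List (MLetter n × Bool)), RW (l ++ (Sum.inl x', δ') :: r) →
      (∀ z ∈ l, z.1.isRight = true) → ¬(x' = x ∧ δ' = !δ) →
      RW ((Sum.inl x, δ) :: (l ++ (Sum.inl x', δ') :: r)) := by
    intro x δ x' δ' l r hRW hB hnc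
    refine List.isChain_cons.mpr ⟨?_, hRW⟩
    intro b hb
    rw [List.head?_append] at hb
    rintro ⟨hfst, hsnd⟩
    cases hl : l.head? with
    | some z =>
      rw [hl] at hb
      have hb' : z = b := by simpa using hb
      have hzB := hB z (List.mem_of_mem_head? (by rw [hl]; rfl))
      rw [hb', ← hfst] at hzB
      simp at hzB
    | none =>
      rw [hl] at hb
      have hb' : ((Sum.inl x' : MLetter n), δ') = b := by simpa using hb
      rw [← hb'] at hfst hsnd
      refine hnc ⟨?_, ?_⟩
      · simpa using hfst.symm
      · have : δ = !δ' := by simpa using hsnd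
        rw [this, Bool.not_not]
  have step3 : RW ((Sum.inl x₃, d₃) :: l3) := by
    refine List.isChain_cons.mpr ⟨?_, h3⟩
    intro b hb
    rintro ⟨hfst, -⟩
    have hzB := hB3 b (List.mem_of_mem_head? hb)
    rw [← hfst] at hzB
    simp at hzB
  have step2 : RW (l2 ++ (Sum.inl x₃, d₃) :: l3) :=
    RW_append_cons n h2 hB2 rfl step3
  have step2' : RW ((Sum.inl x₂, d₂) :: (l2 ++ (Sum.inl x₃, d₃) :: l3)) :=
    key x₂ d₂ x₃ d₃ l2 l3 step2 hB2 hnc23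
  have step1 : RW (l1 ++ (Sum.inl x₂, d₂) :: (l2 ++ (Sum.inl x₃, d₃) :: l3)) :=
    RW_append_cons n h1 hB1 rfl step2'
  have step1' : RW ((Sum.inl x₁, d₁) ::
      (l1 ++ (Sum.inl x₂, d₂) :: (l2 ++ (Sum.inl x₃, d₃) :: l3))) :=
    key x₁ d₁ x₂ d₂ l1 _ step1 hB1 hnc12
  exact RW_append_cons n h0 hB0 rfl step1'

/-- Splitting off the first `ℬ`-block and `𝒜`-letter. -/
lemma splitB : ∀ (l0 m0 : List (MLetter n × Bool)) {c c' : MLetter n × Bool}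
    {r r' : List (MLetter n × Bool)},
    (∀ z ∈ l0, z.1.isRight = true) → (∀ z ∈ m0, z.1.isRight = true) →
    c.1.isRight = false → c'.1.isRight = false →
    l0 ++ c :: r = m0 ++ c' :: r' → l0 = m0 ∧ c = c' ∧ r = r' := by
  intro l0
  induction l0 with
  | nil =>
    intro m0 c c' r r' _ hB' hc hc' he
    cases m0 with
    | nil =>
      simp only [List.nil_append, List.cons.injEq] at he
      exact ⟨rfl, he.1, he.2⟩
    | cons z m0 =>
      exfalso
      simp only [List.nil_append, List.cons_append, List.cons.injEq] at he
      have := hB' z List.mem_cons_self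
      rw [← he.1] at this
      rw [this] at hc
      simp at hc
  | cons z l0 ih =>
    intro m0 c c' r r' hB hB' hc hc' he
    cases m0 with
    | nil =>
      exfalso
      simp only [List.nil_append, List.cons_append, List.cons.injEq] at he
      have := hB z List.mem_cons_self
      rw [he.1] at this
      rw [this] at hc'
      simp at hc'
    | cons v m0 =>
      simp only [List.cons_append, List.cons.injEq] at he
      obtain ⟨hzv, he'⟩ := he
      obtain ⟨e1, e2, e3⟩ := ih m0 (fun u hu => hB u (List.mem_cons_of_mem z hu))
        (fun u hu => hB' u (List.mem_cons_of_mem v hu)) hc hc' he'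
      exact ⟨by rw [hzv, e1], e2, e3⟩

lemma parse_W3 {x₁ x₂ x₃ : Fin n} {d₁ d₂ d₃ : Bool}
    {l0 l1 l2 l3 m0 m1 m2 m3 : List (MLetter n × Bool)}
    (hB0 : ∀ z ∈ l0, z.1.isRight = true) (hB1 : ∀ z ∈ l1, z.1.isRight = true)
    (hB2 : ∀ z ∈ l2, z.1.isRight = true) (hB3 : ∀ z ∈ l3, z.1.isRight = true)
    (hC0 : ∀ z ∈ m0, z.1.isRight = true) (hC1 : ∀ z ∈ m1, z.1.isRight = true)
    (hC2 : ∀ z ∈ m2, z.1.isRight = true) (hC3 : ∀ z ∈ m3, z.1.isRight = true)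
    (he : W3 n x₁ x₂ x₃ d₁ d₂ d₃ l0 l1 l2 l3 = W3 n x₁ x₂ x₃ d₁ d₂ d₃ m0 m1 m2 m3) :
    l1 = m1 ∧ l2 = m2 := by
  rw [W3, W3] at he
  obtain ⟨-, -, he1⟩ := splitB n l0 m0 hB0 hC0 (show ((Sum.inl x₁ : MLetter n), d₁).1.isRight = false from rfl) (show ((Sum.inl x₁ : MLetter n), d₁).1.isRight = false from rfl) he
  obtain ⟨e1, -, he2⟩ := splitB n l1 m1 hB1 hC1 (show ((Sum.inl x₂ : MLetter n), d₂).1.isRight = false from rfl) (show ((Sum.inl x₂ : MLetter n), d₂).1.isRight = false from rfl) he1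
  obtain ⟨e2, -, -⟩ := splitB n l2 m2 hB2 hC2 (show ((Sum.inl x₃ : MLetter n), d₃).1.isRight = false from rfl) (show ((Sum.inl x₃ : MLetter n), d₃).1.isRight = false from rfl) he2
  exact ⟨e1, e2⟩

/-- Uniqueness of the sandwich decomposition. -/
lemma seven_eq {x₁ x₂ x₃ : Fin n} {d₁ d₂ d₃ : Bool}
    {u0 u1 u2 u3 v0 v1 v2 v3 : FreeGroup (MLetter n)}
    (hu0 : IsBWord n u0) (hu1 : IsBWord n u1) (hu2 : IsBWord n u2) (hu3 : IsBWord n u3)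
    (hv0 : IsBWord n v0) (hv1 : IsBWord n v1) (hv2 : IsBWord n v2) (hv3 : IsBWord n v3)
    (hnc12 : ¬(x₂ = x₁ ∧ d₂ = !d₁)) (hnc23 : ¬(x₃ = x₂ ∧ d₃ = !d₂))
    (heq : u0 * bpow (FreeGroup.of (Sum.inl x₁)) d₁ * u1 *
        bpow (FreeGroup.of (Sum.inl x₂)) d₂ * u2 * bpow (FreeGroup.of (Sum.inl x₃)) d₃ *
        u3 =
      v0 * bpow (FreeGroup.of (Sum.inl x₁)) d₁ * v1 * bpow (FreeGroup.of (Sum.inl x₂)) d₂ *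
        v2 * bpow (FreeGroup.of (Sum.inl x₃)) d₃ * v3) :
    u1 = v1 ∧ u2 = v2 := by
  rw [mk_W3, mk_W3] at heq
  have hW : W3 n x₁ x₂ x₃ d₁ d₂ d₃ u0.toWord u1.toWord u2.toWord u3.toWord =
      W3 n x₁ x₂ x₃ d₁ d₂ d₃ v0.toWord v1.toWord v2.toWord v3.toWord := by
    have t1 := toWord_mk_of_RW (RW_W3 n (RW_toWord n u0) (RW_toWord n u1) (RW_toWord n u2)
      (RW_toWord n u3) hu0 hu1 hu2 hu3 hnc12 hnc23)
    have t2 := toWord_mk_of_RW (RW_W3 n (RW_toWord n v0) (RW_toWord n v1) (RW_toWord n v2)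
      (RW_toWord n v3) hv0 hv1 hv2 hv3 hnc12 hnc23)
    rw [← t1, ← t2, heq]
  obtain ⟨e1, e2⟩ := parse_W3 n hu0 hu1 hu2 hu3 hv0 hv1 hv2 hv3 hW
  constructor
  · rw [← FreeGroup.mk_toWord (x := u1), ← FreeGroup.mk_toWord (x := v1), e1]
  · rw [← FreeGroup.mk_toWord (x := u2), ← FreeGroup.mk_toWord (x := v2), e2]

lemma rlen_bpow_of (z : MLetter n) (δ : Bool) : rlen n (bpow (FreeGroup.of z) δ) = 1 := by
  cases δ
  · rw [rlen, show bpow (FreeGroup.of z) false = (FreeGroup.of z)⁻¹ from rfl,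
      FreeGroup.toWord_inv, FreeGroup.invRev_length, FreeGroup.toWord_of]
    rfl
  · rw [rlen, show bpow (FreeGroup.of z) true = FreeGroup.of z from rfl,
      FreeGroup.toWord_of]
    rfl

lemma bpow_cancel (v : FreeGroup (MLetter n)) (δ : Bool) :
    bpow v δ * bpow v (!δ) = 1 := by
  cases δ <;> simp [bpow]

/-- Reducedness of the initial word: no cancellations among `x₁^{d₁} x₂^{d₂} x₃^{d₃}`. -/
lemma nocancel {x₁ x₂ x₃ : Fin n} {d₁ d₂ d₃ : Bool} {w0 : FreeGroup (MLetter n)}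
    (h0 : w0 = bpow (FreeGroup.of (Sum.inl x₁)) d₁ * bpow (FreeGroup.of (Sum.inl x₂)) d₂ *
      bpow (FreeGroup.of (Sum.inl x₃)) d₃)
    (h0red : rlen n w0 = 3) :
    ¬(x₂ = x₁ ∧ d₂ = !d₁) ∧ ¬(x₃ = x₂ ∧ d₃ = !d₂) := by
  constructor
  · rintro ⟨rfl, rfl⟩
    rw [bpow_cancel, one_mul] at h0
    rw [h0, rlen_bpow_of] at h0red
    omega
  · rintro ⟨rfl, rfl⟩
    rw [mul_assoc, bpow_cancel, mul_one] at h0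
    rw [h0, rlen_bpow_of] at h0red
    omega

end SC
namespace SC

open List FreeGroup

variable (n : ℕ) (η : MLetter n × Fin n ≃ Fin (n * (n + 2)))

def UL0 (y : ℕ → MLetter n) (e : ℕ → Bool) (t : ℕ) (x₁ : Fin n) (d₁ : Bool) :
    List (VL n) :=
  match d₁ with
  | true => LxL n y e x₁ t
  | false => []

def UL1 (y : ℕ → MLetter n) (e : ℕ → Bool) (t : ℕ) (x₁ x₂ : Fin n) (d₁ d₂ : Bool) :
    List (VL n) :=
  (match d₁ with
    | true => []
    | false => FreeGroup.invRev (LxL n y e x₁ t)) ++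
  (match d₂ with
    | true => LxL n y e x₂ t
    | false => [])

def UL2 (y : ℕ → MLetter n) (e : ℕ → Bool) (t : ℕ) (x₂ x₃ : Fin n) (d₂ d₃ : Bool) :
    List (VL n) :=
  (match d₂ with
    | true => []
    | false => FreeGroup.invRev (LxL n y e x₂ t)) ++
  (match d₃ with
    | true => LxL n y e x₃ t
    | false => [])

def UL3 (y : ℕ → MLetter n) (e : ℕ → Bool) (t : ℕ) (x₃ : Fin n) (d₃ : Bool) :
    List (VL n) :=
  match d₃ with
  | true => []
  | false => FreeGroup.invRev (LxL n y e x₃ t)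

lemma decomp (y : ℕ → MLetter n) (e : ℕ → Bool) (w : ℕ → FreeGroup (MLetter n)) (t : ℕ)
    (x₁ x₂ x₃ : Fin n) (d₁ d₂ d₃ : Bool)
    (hsemi : IsSemiComputation n η t y e w)
    (h0 : w 0 = bpow (FreeGroup.of (Sum.inl x₁)) d₁ * bpow (FreeGroup.of (Sum.inl x₂)) d₂ *
      bpow (FreeGroup.of (Sum.inl x₃)) d₃) :
    w t = ProdL n η (UL0 n y e t x₁ d₁) * bpow (FreeGroup.of (Sum.inl x₁)) d₁ *
      ProdL n η (UL1 n y e t x₁ x₂ d₁ d₂) * bpow (FreeGroup.of (Sum.inl x₂)) d₂ *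
      ProdL n η (UL2 n y e t x₂ x₃ d₂ d₃) * bpow (FreeGroup.of (Sum.inl x₃)) d₃ *
      ProdL n η (UL3 n y e t x₃ d₃) := by
  rw [dec_aux n η hsemi h0 t le_rfl]
  cases d₁ <;> cases d₂ <;> cases d₃ <;>
    simp only [UL0, UL1, UL2, UL3, Ff, ProdL_append, ProdL_invRev, ProdL_nil,
      List.append_nil, List.nil_append, bpow, Bool.false_eq_true, if_false, if_true, one_mul, mul_one] <;>
    group

lemma RedV_UL0 {t y e} (hh : ReducedHistory n t y e) (x₁ : Fin n) (d₁ : Bool) :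
    RedV n (UL0 n y e t x₁ d₁) := by
  cases d₁
  · exact List.isChain_nil
  · exact RedV_LxL n hh x₁

lemma RedV_UL3 {t y e} (hh : ReducedHistory n t y e) (x₃ : Fin n) (d₃ : Bool) :
    RedV n (UL3 n y e t x₃ d₃) := by
  cases d₃
  · exact RedV_invRev n (RedV_LxL n hh x₃)
  · exact List.isChain_nil

lemma RedV_UL1 {t y e} (hh : ReducedHistory n t y e) {x₁ x₂ : Fin n} {d₁ d₂ : Bool}
    (hnc : ¬(x₂ = x₁ ∧ d₂ = !d₁)) : RedV n (UL1 n y e t x₁ x₂ d₁ d₂) := by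
  cases d₁ <;> cases d₂
  · simpa [UL1] using RedV_invRev n (RedV_LxL n hh x₁)
  · exact RedV_inv_append n hh (fun hx => hnc ⟨hx, rfl⟩)
  · exact List.isChain_nil
  · simpa [UL1] using RedV_LxL n hh x₂

lemma RedV_UL2 {t y e} (hh : ReducedHistory n t y e) {x₂ x₃ : Fin n} {d₂ d₃ : Bool}
    (hnc : ¬(x₃ = x₂ ∧ d₃ = !d₂)) : RedV n (UL2 n y e t x₂ x₃ d₂ d₃) := by
  cases d₂ <;> cases d₃
  · simpa [UL2] using RedV_invRev n (RedV_LxL n hh x₂)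
  · exact RedV_inv_append n hh (fun hx => hnc ⟨hx, rfl⟩)
  · exact List.isChain_nil
  · simpa [UL2] using RedV_LxL n hh x₃

lemma LxL_ext {y y' : ℕ → MLetter n} {e e' : ℕ → Bool} {x : Fin n} {t t' : ℕ}
    (h : LxL n y' e' x t' = LxL n y e x t) :
    t' = t ∧ ∀ i < t, y' i = y i ∧ e' i = e i := by
  have hlen : t' = t := by simpa using congrArg List.length h
  subst hlen
  refine ⟨rfl, ?_⟩
  intro i hi
  have h2 := congrArg (fun l => l[i]?) h
  simp only [LxL, fL_getElem?, if_pos hi, Option.some.injEq] at h2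
  exact ⟨by simpa using congrArg (fun p => p.1.1) h2,
    by simpa using congrArg (fun p => p.2) h2⟩

lemma extract1 {y y' : ℕ → MLetter n} {e e' : ℕ → Bool} {x₁ x₂ : Fin n} {t t' : ℕ}
    {d₁ : Bool} (h : UL1 n y' e' t' x₁ x₂ d₁ true = UL1 n y e t x₁ x₂ d₁ true) :
    LxL n y' e' x₂ t' = LxL n y e x₂ t := by
  cases d₁
  · simp only [UL1] at h
    have hlen : t' = t := by
      have h2 := congrArg List.length h
      simp only [List.length_append, FreeGroup.invRev_length, LxL_length] at h2
      omega
    exact (List.append_inj h (by simp [FreeGroup.invRev_length, hlen])).2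
  · simpa only [UL1, List.nil_append] using h

lemma extract2 {y y' : ℕ → MLetter n} {e e' : ℕ → Bool} {x₂ x₃ : Fin n} {t t' : ℕ}
    {d₃ : Bool} (h : UL2 n y' e' t' x₂ x₃ false d₃ = UL2 n y e t x₂ x₃ false d₃) :
    LxL n y' e' x₂ t' = LxL n y e x₂ t := by
  cases d₃
  · simp only [UL2, List.append_nil] at h
    exact FreeGroup.invRev_injective h
  · simp only [UL2] at h
    have hlen : t' = t := by
      have h2 := congrArg List.length h
      simp only [List.length_append, FreeGroup.invRev_length, LxL_length] at h2
      omega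
    exact FreeGroup.invRev_injective
      (List.append_inj h (by simp [FreeGroup.invRev_length, hlen])).1

end SC

open SC

/-- **Lemma 5.14.** Let `w₀ → ⋯ → w_t` be a semi-computation with reduced history `H`,
where `w₀ = x₁^{δ₁} x₂^{δ₂} x₃^{δ₃}` is reduced with `x_i ∈ 𝒜₁`.  Then there are
`u₀, u₁, u₂, u₃ ∈ F(ℬ)` with
(1) `w_t = u₀ x₁^{δ₁} u₁ x₂^{δ₂} u₂ x₃^{δ₃} u₃`;
(2) `‖u₀‖, ‖u₃‖ ≤ D·t`;
(3) `(1/2)·D·t ≤ ‖u₁‖ + ‖u₂‖ ≤ 3·D·t`;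
(4) the pair `(u₁, u₂)` uniquely determines `H`. -/
theorem statement15 (n : ℕ) (hn : 0 < n) (η : MLetter n × Fin n ≃ Fin (n * (n + 2)))
    (x₁ x₂ x₃ : Fin n) (d₁ d₂ d₃ : Bool)
    (t : ℕ) (y : ℕ → MLetter n) (e : ℕ → Bool) (w : ℕ → FreeGroup (MLetter n))
    (hsemi : IsSemiComputation n η t y e w) (hhist : ReducedHistory n t y e)
    (h0 : w 0 = bpow (FreeGroup.of (Sum.inl x₁)) d₁ * bpow (FreeGroup.of (Sum.inl x₂)) d₂ *
      bpow (FreeGroup.of (Sum.inl x₃)) d₃)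
    (h0red : rlen n (w 0) = 3) :
    ∃ u₀ u₁ u₂ u₃ : FreeGroup (MLetter n),
      IsBWord n u₀ ∧ IsBWord n u₁ ∧ IsBWord n u₂ ∧ IsBWord n u₃ ∧
      w t = u₀ * bpow (FreeGroup.of (Sum.inl x₁)) d₁ * u₁ *
        bpow (FreeGroup.of (Sum.inl x₂)) d₂ * u₂ *
        bpow (FreeGroup.of (Sum.inl x₃)) d₃ * u₃ ∧
      rlen n u₀ ≤ Dconst n * t ∧ rlen n u₃ ≤ Dconst n * t ∧
      Dconst n * t ≤ 2 * (rlen n u₁ + rlen n u₂) ∧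
      rlen n u₁ + rlen n u₂ ≤ 3 * (Dconst n * t) ∧
      ∀ (t' : ℕ) (y' : ℕ → MLetter n) (e' : ℕ → Bool) (w' : ℕ → FreeGroup (MLetter n)),
        IsSemiComputation n η t' y' e' w' → ReducedHistory n t' y' e' → w' 0 = w 0 →
        ∀ u₀' u₃' : FreeGroup (MLetter n), IsBWord n u₀' → IsBWord n u₃' →
          w' t' = u₀' * bpow (FreeGroup.of (Sum.inl x₁)) d₁ * u₁ *
            bpow (FreeGroup.of (Sum.inl x₂)) d₂ * u₂ *
            bpow (FreeGroup.of (Sum.inl x₃)) d₃ * u₃' →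
          t' = t ∧ ∀ i < t, y' i = y i ∧ e' i = e i := by
  have hQ := Qc_ge n hn
  have hD : Dconst n = 4 * Qc n := by rw [Dconst, Qc]; ring
  obtain ⟨hnc12, hnc23⟩ := nocancel n h0 h0red
  have hR0 := RedV_UL0 n hhist x₁ d₁
  have hR1 := RedV_UL1 n hhist (x₁ := x₁) (x₂ := x₂) hnc12
  have hR2 := RedV_UL2 n hhist (x₂ := x₂) (x₃ := x₃) hnc23
  have hR3 := RedV_UL3 n hhist x₃ d₃
  refine ⟨ProdL n η (UL0 n y e t x₁ d₁), ProdL n η (UL1 n y e t x₁ x₂ d₁ d₂),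
    ProdL n η (UL2 n y e t x₂ x₃ d₂ d₃), ProdL n η (UL3 n y e t x₃ d₃),
    IsBWord_ProdL n η hn hR0, IsBWord_ProdL n η hn hR1, IsBWord_ProdL n η hn hR2,
    IsBWord_ProdL n η hn hR3,
    decomp n η y e w t x₁ x₂ x₃ d₁ d₂ d₃ hsemi h0, ?_, ?_, ?_, ?_, ?_⟩
  · rw [rlen_ProdL n η hn hR0, hD]
    have h3 : (UL0 n y e t x₁ d₁).length ≤ t := by cases d₁ <;> simp [UL0]
    exact le_trans (NL_len_le n η hn hR0) (Nat.mul_le_mul_left _ h3)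
  · rw [rlen_ProdL n η hn hR3, hD]
    have h3 : (UL3 n y e t x₃ d₃).length ≤ t := by
      cases d₃ <;> simp [UL3, FreeGroup.invRev_length]
    exact le_trans (NL_len_le n η hn hR3) (Nat.mul_le_mul_left _ h3)
  · rw [hD]
    have g1 : 2 * Qc n * (UL1 n y e t x₁ x₂ d₁ d₂).length ≤
        rlen n (ProdL n η (UL1 n y e t x₁ x₂ d₁ d₂)) := by
      rw [rlen_ProdL n η hn hR1]
      exact NL_len_ge n η hn hR1
    have g2 : 2 * Qc n * (UL2 n y e t x₂ x₃ d₂ d₃).length ≤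
        rlen n (ProdL n η (UL2 n y e t x₂ x₃ d₂ d₃)) := by
      rw [rlen_ProdL n η hn hR2]
      exact NL_len_ge n η hn hR2
    have e4 : 4 * Qc n * t = 2 * (2 * Qc n * t) := by ring
    cases d₂
    · have hlen : t ≤ (UL2 n y e t x₂ x₃ false d₃).length := by
        cases d₃ <;> simp [UL2, FreeGroup.invRev_length]
      have h5 : 2 * Qc n * t ≤ 2 * Qc n * (UL2 n y e t x₂ x₃ false d₃).length :=
        Nat.mul_le_mul_left _ hlen
      omega
    · have hlen : t ≤ (UL1 n y e t x₁ x₂ d₁ true).length := by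
        cases d₁ <;> simp [UL1, FreeGroup.invRev_length]
      have h5 : 2 * Qc n * t ≤ 2 * Qc n * (UL1 n y e t x₁ x₂ d₁ true).length :=
        Nat.mul_le_mul_left _ hlen
      omega
  · have g1 : rlen n (ProdL n η (UL1 n y e t x₁ x₂ d₁ d₂)) ≤
        4 * Qc n * (UL1 n y e t x₁ x₂ d₁ d₂).length := by
      rw [rlen_ProdL n η hn hR1]
      exact NL_len_le n η hn hR1
    have g2 : rlen n (ProdL n η (UL2 n y e t x₂ x₃ d₂ d₃)) ≤
        4 * Qc n * (UL2 n y e t x₂ x₃ d₂ d₃).length := by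
      rw [rlen_ProdL n η hn hR2]
      exact NL_len_le n η hn hR2
    have hsum : (UL1 n y e t x₁ x₂ d₁ d₂).length + (UL2 n y e t x₂ x₃ d₂ d₃).length ≤
        3 * t := by
      cases d₁ <;> cases d₂ <;> cases d₃ <;>
        simp [UL1, UL2, FreeGroup.invRev_length] <;> omega
    calc rlen n (ProdL n η (UL1 n y e t x₁ x₂ d₁ d₂)) +
          rlen n (ProdL n η (UL2 n y e t x₂ x₃ d₂ d₃)) ≤
        4 * Qc n * (UL1 n y e t x₁ x₂ d₁ d₂).length +
          4 * Qc n * (UL2 n y e t x₂ x₃ d₂ d₃).length := add_le_add g1 g2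
      _ = 4 * Qc n * ((UL1 n y e t x₁ x₂ d₁ d₂).length +
          (UL2 n y e t x₂ x₃ d₂ d₃).length) := by ring
      _ ≤ 4 * Qc n * (3 * t) := Nat.mul_le_mul_left _ hsum
      _ = 3 * (Dconst n * t) := by rw [hD]; ring
  · intro t' y' e' w' hsemi' hhist' hw0' u₀' u₃' hB0' hB3' heq'
    have hdec' := decomp n η y' e' w' t' x₁ x₂ x₃ d₁ d₂ d₃ hsemi' (hw0'.trans h0)
    have hEq := hdec'.symm.trans heq'
    have hR1' := RedV_UL1 n hhist' (x₁ := x₁) (x₂ := x₂) hnc12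
    have hR2' := RedV_UL2 n hhist' (x₂ := x₂) (x₃ := x₃) hnc23
    obtain ⟨e1, e2⟩ := seven_eq n
      (IsBWord_ProdL n η hn (RedV_UL0 n hhist' x₁ d₁))
      (IsBWord_ProdL n η hn hR1')
      (IsBWord_ProdL n η hn hR2')
      (IsBWord_ProdL n η hn (RedV_UL3 n hhist' x₃ d₃))
      hB0' (IsBWord_ProdL n η hn hR1) (IsBWord_ProdL n η hn hR2) hB3'
      hnc12 hnc23 hEq
    have hL1 : UL1 n y' e' t' x₁ x₂ d₁ d₂ = UL1 n y e t x₁ x₂ d₁ d₂ :=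
      ProdL_inj n η hn hR1' hR1 e1
    have hL2 : UL2 n y' e' t' x₂ x₃ d₂ d₃ = UL2 n y e t x₂ x₃ d₂ d₃ :=
      ProdL_inj n η hn hR2' hR2 e2
    cases d₂
    · exact LxL_ext n (extract2 n hL2)
    · exact LxL_ext n (extract1 n hL1)
end

section
/- For every word w over Y_C ∪ Y_C^{-1} that represents the identity of R_C, there exist m₀ ∈ ℕ with C·m₀ ≤ ‖w‖ (where ‖w‖ is the length of w), relators r₁, …, r_{m₀} ∈ S_C with ‖r_i‖ ≤ 2‖w‖, signs ε₁, …, ε_{m₀} ∈ {±1}, and elements g₁, …, g_{m₀} of the free group F(Y_C), such that w = g₁ r₁^{ε₁} g₁^{-1} ⋯ g_{m₀} r_{m₀}^{ε_{m₀}} g_{m₀}^{-1} holds in F(Y_C). (This is the algebraic form, via van Kampen's lemma, of the statement that w bounds a van Kampen diagram over ⟨Y_C | S_C⟩ with at most ‖w‖/C cells, each of perimeter at most 2‖w‖.) -/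
/-- Evaluate a word over `(Y ∪ Y⁻¹)` (with `Y = X ⊔ X̄`) in the group `R`: the letter
`x` maps to `f x`, the letter `x̄` maps to `(f x)⁻¹` (this is evaluation of the
`ξ`-image of the word). -/
def evalWord {X : Type*} {R : Type*} [Group R] (f : X → R)
    (w : List ((X ⊕ X) × Bool)) : R :=
  (w.map fun p =>
    if p.2 then Sum.elim f (fun x => (f x)⁻¹) p.1
    else (Sum.elim f (fun x => (f x)⁻¹) p.1)⁻¹).prod

/-- The generator block `A_a = a_{1,a} ⋯ a_{C,a} ∈ F(Y_C)` for a letter `a ∈ Y = X ⊔ X̄`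
(here `Y_C` is encoded as `Fin C × (X ⊕ X)`). -/
def blockA' {X : Type*} (C : ℕ) (a : X ⊕ X) : FreeGroup (Fin C × (X ⊕ X)) :=
  (List.ofFn fun j : Fin C => FreeGroup.of (j, a)).prod

/-- The relator `r_C = r(A_1, …, A_m) ∈ S_C` obtained from a positive word `s ∈ S`. -/
def relC {X : Type*} (C : ℕ) (s : List (X ⊕ X)) : FreeGroup (Fin C × (X ⊕ X)) :=
  (s.map (blockA' C)).prod

namespace S19

open Monoid

set_option linter.unusedSectionVars false

variable {X R : Type} [Group R]

/-- `F(Y_C)`. -/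
abbrev FG (X : Type) (C : ℕ) : Type := FreeGroup (Fin C × (X ⊕ X))

/-- evaluation of letters of `Y` in `R`. -/
def rho (f : X → R) : X ⊕ X → R := Sum.elim f fun x => (f x)⁻¹

@[simp] lemma evalWord_nil (f : X → R) : evalWord f [] = 1 := rfl

lemma evalWord_cons (f : X → R) (p : (X ⊕ X) × Bool) (v : List ((X ⊕ X) × Bool)) :
    evalWord f (p :: v) = (if p.2 then rho f p.1 else (rho f p.1)⁻¹) * evalWord f v := by
  simp [evalWord, rho]

lemma rho_swap (f : X → R) (a : X ⊕ X) : rho f (Sum.swap a) = (rho f a)⁻¹ := by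
  cases a <;> simp [rho]

/-- `Φ(v)`, the image of the word `v` over `Y ∪ Y⁻¹` under `y ↦ A_y`. -/
def blockPow (C : ℕ) (p : (X ⊕ X) × Bool) : FG X C :=
  if p.2 then blockA' C p.1 else (blockA' C p.1)⁻¹

def Phi (C : ℕ) (v : List ((X ⊕ X) × Bool)) : FG X C := (v.map (blockPow C)).prod

@[simp] lemma Phi_nil (C : ℕ) : Phi (X := X) C [] = 1 := rfl

lemma Phi_cons (C : ℕ) (p : (X ⊕ X) × Bool) (v : List ((X ⊕ X) × Bool)) :
    Phi C (p :: v) = blockPow C p * Phi C v := by simp [Phi]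

lemma Phi_append (C : ℕ) (v₁ v₂ : List ((X ⊕ X) × Bool)) :
    Phi C (v₁ ++ v₂) = Phi C v₁ * Phi C v₂ := by simp [Phi]

lemma relC_eq_Phi (C : ℕ) (s : List (X ⊕ X)) :
    relC C s = Phi C (s.map fun a => (a, true)) := by
  simp [relC, Phi, blockPow, List.map_map, Function.comp_def]

lemma relC_cons (C : ℕ) (a : X ⊕ X) (s : List (X ⊕ X)) :
    relC C (a :: s) = blockA' C a * relC C s := by simp [relC]

/-- the list of generators constituting the block `A_i`. -/
def blockList (C : ℕ) (i : X ⊕ X) : List (FG X C) :=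
  List.ofFn fun k : Fin C => FreeGroup.of (k, i)

lemma blockA'_eq (C : ℕ) (i : X ⊕ X) : blockA' C i = (blockList C i).prod := rfl

/-- prefix of the block before row `j`. -/
def UU (C : ℕ) (j : Fin C) (i : X ⊕ X) : FG X C := ((blockList C i).take j.val).prod

/-- suffix of the block after row `j`. -/
def QQ (C : ℕ) (j : Fin C) (i : X ⊕ X) : FG X C := ((blockList C i).drop (j.val + 1)).prod

lemma block_split (C : ℕ) (j : Fin C) (i : X ⊕ X) :
    blockA' C i = UU C j i * FreeGroup.of (j, i) * QQ C j i := by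
  have hlen : j.val < (blockList C i).length := by
    simp [blockList, List.length_ofFn, j.isLt]
  have h1 : (blockList C i) = (blockList C i).take j.val ++
      ((blockList C i)[j.val] :: (blockList C i).drop (j.val + 1)) := by
    conv_lhs => rw [← List.take_append_drop j.val (blockList C i)]
    rw [List.drop_eq_getElem_cons hlen]
  have h2 : (blockList C i)[j.val] = FreeGroup.of (j, i) := by
    simp [blockList, List.getElem_ofFn]
  rw [blockA'_eq, ← List.take_append_drop j.val (blockList C i)]
  rw [List.drop_eq_getElem_cons hlen, h2]
  simp [UU, QQ, mul_assoc]

/-- The subgroup generated by the non-row-`j` generators. -/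
def HH (C : ℕ) (j : Fin C) : Subgroup (FG X C) :=
  Subgroup.closure {g | ∃ a : Fin C × (X ⊕ X), a.1 ≠ j ∧ g = FreeGroup.of a}

lemma of_mem_HH (C : ℕ) (j : Fin C) (a : Fin C × (X ⊕ X)) (ha : a.1 ≠ j) :
    FreeGroup.of a ∈ HH (X := X) C j :=
  Subgroup.subset_closure ⟨a, ha, rfl⟩

lemma UU_mem (C : ℕ) (j : Fin C) (i : X ⊕ X) : UU C j i ∈ HH (X := X) C j := by
  apply Subgroup.list_prod_mem
  intro x hx
  rw [List.mem_iff_getElem] at hx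
  obtain ⟨n, hn, rfl⟩ := hx
  have hn' : n < j.val := by
    simpa [blockList, List.length_take, List.length_ofFn] using hn
  rw [List.getElem_take]
  have hnC : n < C := lt_trans hn' j.isLt
  have : (blockList C i)[n]'(by simp [blockList, List.length_ofFn, hnC]) =
      FreeGroup.of ((⟨n, hnC⟩ : Fin C), i) := by simp [blockList, List.getElem_ofFn]
  rw [this]
  exact of_mem_HH C j _ (by simp [Fin.ext_iff]; omega)

lemma QQ_mem (C : ℕ) (j : Fin C) (i : X ⊕ X) : QQ C j i ∈ HH (X := X) C j := by
  apply Subgroup.list_prod_mem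
  intro x hx
  rw [List.mem_iff_getElem] at hx
  obtain ⟨n, hn, rfl⟩ := hx
  have hn0 : n < C - (j.val + 1) := by
    simpa [blockList, List.length_drop, List.length_ofFn] using hn
  have hn' : j.val + 1 + n < C := by omega
  rw [List.getElem_drop]
  have : (blockList C i)[j.val + 1 + n]'(by simp [blockList, List.length_ofFn, hn']) =
      FreeGroup.of ((⟨j.val + 1 + n, hn'⟩ : Fin C), i) := by simp [blockList, List.getElem_ofFn]
  rw [this]
  exact of_mem_HH C j _ (by simp [Fin.ext_iff]; omega)

/-! ### The free product `R ∗ F(T)` -/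

/-- Bool-indexed family: `true ↦ R`, `false ↦ F`. -/
def Fam (R F : Type) : Bool → Type
  | true => R
  | false => F

instance famGroup {R F : Type} [Group R] [Group F] : (b : Bool) → Group (Fam R F b)
  | true => inferInstanceAs (Group R)
  | false => inferInstanceAs (Group F)

/-- the target free product `R ∗ F(Y_C)`. -/
abbrev Tgt (R X : Type) [Group R] (C : ℕ) : Type := Monoid.CoprodI (Fam R (FG X C))

/-- left inclusion. -/
def inlR (C : ℕ) : R →* Tgt R X C := Monoid.CoprodI.of (M := Fam R (FG X C)) (i := true)

/-- right inclusion. -/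
def inrF (C : ℕ) : FG X C →* Tgt R X C := Monoid.CoprodI.of (M := Fam R (FG X C)) (i := false)

/-- the projection of `R ∗ F(Y_C)` onto `F(Y_C)`. -/
def piF (C : ℕ) : Tgt R X C →* FG X C :=
  Monoid.CoprodI.lift (fun b => match b with
    | true => (1 : R →* FG X C)
    | false => MonoidHom.id (FG X C))

@[simp] lemma piF_inrF (C : ℕ) (x : FG X C) : piF (R := R) C (inrF C x) = x := by
  exact Monoid.CoprodI.lift_of (M := Fam R (FG X C)) (N := FG X C)
    (fun b => match b with
      | true => (1 : R →* FG X C)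
      | false => MonoidHom.id (FG X C)) (i := false) (m := x)

lemma inrF_injective (C : ℕ) : Function.Injective (inrF (R := R) (X := X) C) := by
  intro x y h
  have := congrArg (piF (R := R) C) h
  simpa using this

/-- the homomorphism `β : F(Y_C) → R ∗ F(Y_C)` realizing the quotient `R_C ≃ R ∗ F(T)`
(for the chosen row `j`). -/
def beta (f : X → R) (C : ℕ) (j : Fin C) : FG X C →* Tgt R X C :=
  FreeGroup.lift fun a =>
    if a.1 = j then (inrF C (UU C j a.2))⁻¹ * inlR C (rho f a.2) * (inrF C (QQ C j a.2))⁻¹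
    else inrF C (FreeGroup.of a)

lemma beta_of_ne (f : X → R) (C : ℕ) (j : Fin C) (a : Fin C × (X ⊕ X)) (ha : a.1 ≠ j) :
    beta f C j (FreeGroup.of a) = inrF C (FreeGroup.of a) := by
  simp [beta, FreeGroup.lift_apply_of, ha]

lemma beta_of_eq (f : X → R) (C : ℕ) (j : Fin C) (i : X ⊕ X) :
    beta f C j (FreeGroup.of (j, i)) =
      (inrF C (UU C j i))⁻¹ * inlR C (rho f i) * (inrF C (QQ C j i))⁻¹ := by
  simp [beta, FreeGroup.lift_apply_of]

lemma beta_HH (f : X → R) (C : ℕ) (j : Fin C) {x : FG X C} (hx : x ∈ HH (X := X) C j) :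
    beta f C j x = inrF C x := by
  induction hx using Subgroup.closure_induction with
  | mem g hg => obtain ⟨a, ha, rfl⟩ := hg; exact beta_of_ne f C j a ha
  | one => simp
  | mul a b _ _ iha ihb => simp [map_mul, iha, ihb]
  | inv a _ iha => simp [map_inv, iha]

lemma beta_block (f : X → R) (C : ℕ) (j : Fin C) (i : X ⊕ X) :
    beta f C j (blockA' C i) = inlR C (rho f i) := by
  rw [block_split C j i, map_mul, map_mul, beta_of_eq,
    beta_HH f C j (UU_mem C j i), beta_HH f C j (QQ_mem C j i)]
  group

lemma beta_Phi (f : X → R) (C : ℕ) (j : Fin C) (v : List ((X ⊕ X) × Bool)) :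
    beta f C j (Phi C v) = inlR C (evalWord f v) := by
  induction v with
  | nil => simp
  | cons p v ih =>
    rw [Phi_cons, map_mul, ih, evalWord_cons, map_mul]
    congr 1
    by_cases hp : p.2 <;> simp [blockPow, hp, beta_block, map_inv]

/-! ### Nontriviality of reduced alternating words in the free product -/

section Alt

variable (C : ℕ)

/-- alternating word `[r₁, x₁, r₂, x₂, …] ++ tail` as a list of letters of the
free product. -/
def wcore (tail : List (Σ b, Fam R (FG X C) b)) :
    List (R × FG X C) → List (Σ b, Fam R (FG X C) b)
  | [] => tail
  | p :: tl => ⟨true, p.1⟩ :: ⟨false, p.2⟩ :: wcore tail tl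

lemma wcore_head (tail : List (Σ b, Fam R (FG X C) b)) (l : List (R × FG X C))
    (htail : ∃ (r : R) (t : List (Σ b, Fam R (FG X C) b)), tail = ⟨true, r⟩ :: t) :
    ∃ (r : R) (t : List (Σ b, Fam R (FG X C) b)),
      wcore (X := X) C tail l = ⟨true, r⟩ :: t := by
  cases l with
  | nil => exact htail
  | cons p tl => exact ⟨p.1, _, rfl⟩

lemma wcore_chain (tail : List (Σ b, Fam R (FG X C) b)) (l : List (R × FG X C))
    (htail : ∃ (r : R) (t : List (Σ b, Fam R (FG X C) b)), tail = ⟨true, r⟩ :: t)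
    (hchain : tail.Chain' fun s s' => s.fst ≠ s'.fst) :
    (wcore (X := X) C tail l).Chain' fun s s' => s.fst ≠ s'.fst := by
  induction l with
  | nil => exact hchain
  | cons p tl ih =>
    obtain ⟨r, t, ht⟩ := wcore_head C tail tl htail
    rw [wcore]
    simp only [List.Chain']
    rw [List.isChain_cons_cons, ht, List.isChain_cons_cons]
    exact ⟨by simp, by simp, by rw [← ht]; exact ih⟩

lemma wcore_ne_one (tail : List (Σ b, Fam R (FG X C) b)) (l : List (R × FG X C))
    (htail : ∀ s ∈ tail, s.snd ≠ 1)
    (hl : ∀ p ∈ l, p.1 ≠ 1 ∧ p.2 ≠ 1) :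
    ∀ s ∈ wcore (X := X) C tail l, s.snd ≠ 1 := by
  induction l with
  | nil => exact htail
  | cons p tl ih =>
    intro s hs
    rw [wcore] at hs
    simp only [List.mem_cons] at hs
    rcases hs with rfl | rfl | hs
    · exact (hl p (by simp)).1
    · exact (hl p (by simp)).2
    · exact ih (fun q hq => hl q (List.mem_cons_of_mem _ hq)) s hs

lemma wcore_prod (tail : List (Σ b, Fam R (FG X C) b)) (l : List (R × FG X C)) :
    ((wcore (X := X) C tail l).map fun s =>
        Monoid.CoprodI.of (M := Fam R (FG X C)) (i := s.fst) s.snd).prod =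
      (l.map fun p => inlR C p.1 * inrF C p.2).prod *
        (tail.map fun s =>
          Monoid.CoprodI.of (M := Fam R (FG X C)) (i := s.fst) s.snd).prod := by
  induction l with
  | nil => simp [wcore]
  | cons p tl ih =>
    rw [wcore]
    simp only [List.map_cons, List.prod_cons, ih, inlR, inrF, mul_assoc]
    rfl

lemma word_prod_ne_one (L : List (Σ b, Fam R (FG X C) b)) (hne : L ≠ [])
    (h1 : ∀ s ∈ L, s.snd ≠ 1) (hchain : L.Chain' fun s s' => s.fst ≠ s'.fst) :
    (L.map fun s =>
      Monoid.CoprodI.of (M := Fam R (FG X C)) (i := s.fst) s.snd).prod ≠ 1 := by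
  classical
  intro hcontra
  set W : Monoid.CoprodI.Word (Fam R (FG X C)) := ⟨L, h1, hchain⟩ with hW
  have hprod : W.prod = 1 := hcontra
  have hinj : Function.Injective
      (Monoid.CoprodI.Word.prod (M := Fam R (FG X C))) := by
    intro w1 w2 h
    have h1' := (Monoid.CoprodI.Word.equiv (M := Fam R (FG X C))).right_inv w1
    have h2' := (Monoid.CoprodI.Word.equiv (M := Fam R (FG X C))).right_inv w2
    rw [← h1', ← h2']
    simp only [Equiv.invFun_as_coe] at h ⊢
    exact congrArg _ h
  have hempty : W = Monoid.CoprodI.Word.empty := by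
    apply hinj
    rw [hprod, Monoid.CoprodI.Word.prod_empty]
  have := congrArg Monoid.CoprodI.Word.toList hempty
  simp only [hW, Monoid.CoprodI.Word.empty] at this
  exact hne this

lemma alt_ne_one (z : R) (y : FG X C) (l : List (R × FG X C))
    (hl : ∀ p ∈ l, p.1 ≠ 1 ∧ p.2 ≠ 1) (hz : z ≠ 1) :
    (l.map fun p => inlR C p.1 * inrF C p.2).prod * inlR C z * inrF C y ≠ 1 := by
  by_cases hy : y = 1
  · subst hy
    rw [map_one, mul_one]
    have := word_prod_ne_one C (wcore (X := X) C [⟨true, z⟩] l)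
      (by obtain ⟨r, t, ht⟩ := wcore_head C _ l ⟨z, [], rfl⟩; rw [ht]; simp)
      (wcore_ne_one C _ l (by rintro s hs; simp only [List.mem_singleton] at hs; subst hs; exact hz) hl)
      (wcore_chain C _ l ⟨z, [], rfl⟩ (by simp [List.Chain']))
    rw [wcore_prod] at this
    simp only [List.map_cons, List.map_nil, List.prod_cons, List.prod_nil, mul_one] at this
    exact this
  · have := word_prod_ne_one C (wcore (X := X) C [⟨true, z⟩, ⟨false, y⟩] l)
      (by obtain ⟨r, t, ht⟩ := wcore_head C _ l ⟨z, [⟨false, y⟩], rfl⟩; rw [ht]; simp)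
      (wcore_ne_one C _ l (by
        rintro s hs
        simp only [List.mem_cons, List.mem_singleton] at hs
        rcases hs with rfl | rfl | hs
        · exact hz
        · exact hy
        · exact absurd hs List.not_mem_nil) hl)
      (wcore_chain C _ l ⟨z, [⟨false, y⟩], rfl⟩ (by simp [List.Chain']))
    rw [wcore_prod] at this
    simp only [List.map_cons, List.map_nil, List.prod_cons, List.prod_nil, mul_one] at this
    rw [mul_assoc]
    exact this

end Alt

/-! ### Staircases -/

section Stair

variable (f : X → R) (C : ℕ) (j : Fin C)

/-- value of a staircase `x₁ Φ(v₁) x₂ Φ(v₂) ⋯ e` in `F(Y_C)`. -/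
def gval (L : List (FG X C × List ((X ⊕ X) × Bool))) (e : FG X C) : FG X C :=
  (L.map fun c => c.1 * Phi C c.2).prod * e

lemma gval_nil (e : FG X C) : gval (X := X) C [] e = e := by simp [gval]

lemma gval_cons (c : FG X C × List ((X ⊕ X) × Bool)) (L : List (FG X C × List ((X ⊕ X) × Bool)))
    (e : FG X C) : gval C (c :: L) e = c.1 * Phi C c.2 * gval C L e := by
  simp [gval, mul_assoc]

lemma gval_append (L₁ L₂ : List (FG X C × List ((X ⊕ X) × Bool))) (e : FG X C) :
    gval C (L₁ ++ L₂) e = (L₁.map fun c => c.1 * Phi C c.2).prod * gval C L₂ e := by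
  simp [gval, mul_assoc]

lemma beta_gval (L : List (FG X C × List ((X ⊕ X) × Bool))) (e : FG X C)
    (hL : ∀ c ∈ L, c.1 ∈ HH (X := X) C j) (he : e ∈ HH (X := X) C j) :
    beta f C j (gval C L e) =
      (L.map fun c => inrF C c.1 * inlR C (evalWord f c.2)).prod * inrF C e := by
  induction L with
  | nil => rw [gval_nil, beta_HH f C j he]; simp
  | cons c L ih =>
    rw [gval_cons, map_mul, map_mul, beta_HH f C j (hL c (by simp)), beta_Phi,
      ih (fun d hd => hL d (List.mem_cons_of_mem _ hd)) ]
    simp [mul_assoc]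

/-- reshaping of a staircase image into the alternating form. -/
def reshape : R → List (FG X C × List ((X ⊕ X) × Bool)) → List (R × FG X C) × R
  | r₀, [] => ([], r₀)
  | r₀, c :: tl =>
    let p := reshape (evalWord f c.2) tl
    ((r₀, c.1) :: p.1, p.2)

lemma reshape_prod (rest : List (FG X C × List ((X ⊕ X) × Bool))) :
    ∀ r₀ : R, inlR C r₀ * (rest.map fun c => inrF C c.1 * inlR C (evalWord f c.2)).prod =
      ((reshape f C r₀ rest).1.map fun p => inlR C p.1 * inrF C p.2).prod *
        inlR C (reshape f C r₀ rest).2 := by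
  induction rest with
  | nil => intro r₀; simp [reshape]
  | cons c tl ih =>
    intro r₀
    simp only [reshape, List.map_cons, List.prod_cons]
    have hmid : inlR C r₀ * (inrF C c.1 * inlR C (evalWord f c.2) *
          (tl.map fun c => inrF C c.1 * inlR C (evalWord f c.2)).prod)
        = (inlR C r₀ * inrF C c.1) * (inlR C (evalWord f c.2) *
            (tl.map fun c => inrF C c.1 * inlR C (evalWord f c.2)).prod) := by group
    rw [hmid, ih (evalWord f c.2)]
    group

lemma reshape_conds (rest : List (FG X C × List ((X ⊕ X) × Bool))) :
    ∀ r₀ : R, (∀ c ∈ rest, evalWord f c.2 ≠ 1 ∧ c.1 ≠ 1) → r₀ ≠ 1 →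
      (∀ p ∈ (reshape f C r₀ rest).1, p.1 ≠ 1 ∧ p.2 ≠ 1) ∧ (reshape f C r₀ rest).2 ≠ 1 := by
  induction rest with
  | nil => intro r₀ _ hr₀; exact ⟨by simp [reshape], by simpa [reshape] using hr₀⟩
  | cons c tl ih =>
    intro r₀ hrest hr₀
    obtain ⟨ih1, ih2⟩ := ih (evalWord f c.2)
      (fun d hd => hrest d (List.mem_cons_of_mem _ hd)) (hrest c (by simp)).1
    refine ⟨?_, by simpa [reshape] using ih2⟩
    intro p hp
    simp only [reshape, List.mem_cons] at hp
    rcases hp with rfl | hp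
    · exact ⟨hr₀, (hrest c (by simp)).2⟩
    · exact ih1 p hp

lemma case_c (L : List (FG X C × List ((X ⊕ X) × Bool))) (e : FG X C) (hne : L ≠ [])
    (hA : ∀ c ∈ L, evalWord f c.2 ≠ 1) (hB : ∀ c ∈ L.tail, c.1 ≠ 1) :
    (L.map fun c => inrF C c.1 * inlR C (evalWord f c.2)).prod * inrF C e ≠ 1 := by
  rcases L with _ | ⟨c₁, rest⟩
  · exact absurd rfl hne
  intro hcontra
  have hZ : inlR C (evalWord f c₁.2) *
      (rest.map fun c => inrF C c.1 * inlR C (evalWord f c.2)).prod * inrF C (e * c₁.1) = 1 := by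
    have : (inrF C c₁.1)⁻¹ *
        (((c₁ :: rest).map fun c => inrF C c.1 * inlR C (evalWord f c.2)).prod * inrF C e) *
          inrF C c₁.1 = inlR C (evalWord f c₁.2) *
            (rest.map fun c => inrF C c.1 * inlR C (evalWord f c.2)).prod * inrF C (e * c₁.1) := by
      simp only [List.map_cons, List.prod_cons, map_mul]
      group
    rw [← this, hcontra]
    group
  rw [reshape_prod] at hZ
  obtain ⟨h1, h2⟩ := reshape_conds f C rest (evalWord f c₁.2)
    (fun d hd => ⟨hA d (List.mem_cons_of_mem _ hd), hB d hd⟩) (hA c₁ (by simp))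
  exact alt_ne_one C _ _ _ h1 h2 hZ

lemma main_base (e : FG X C) (he : e ∈ HH (X := X) C j)
    (hβ : beta f C j (gval C [] e) = 1) :
    ∃ cells : List (List ((X ⊕ X) × Bool) × FG X C),
      gval (X := X) C [] e = (cells.map fun c => c.2 * Phi C c.1 * c.2⁻¹).prod ∧
      (∀ c ∈ cells, c.1 ≠ [] ∧ evalWord f c.1 = 1) ∧
      (cells.map fun c => c.1.length).sum ≤
        (([] : List (FG X C × List ((X ⊕ X) × Bool))).map fun c => c.2.length).sum := by
  have he1 : e = 1 := by
    apply inrF_injective (R := R) C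
    rw [map_one]
    rw [gval_nil, beta_HH f C j he] at hβ
    exact hβ
  exact ⟨[], by simp [gval_nil, he1], by simp, by simp⟩

lemma main_ind : ∀ (N : ℕ) (L : List (FG X C × List ((X ⊕ X) × Bool))) (e : FG X C),
    L.length ≤ N →
    (∀ c ∈ L, c.1 ∈ HH (X := X) C j ∧ c.2 ≠ []) →
    e ∈ HH (X := X) C j →
    beta f C j (gval C L e) = 1 →
    ∃ cells : List (List ((X ⊕ X) × Bool) × FG X C),
      gval C L e = (cells.map fun c => c.2 * Phi C c.1 * c.2⁻¹).prod ∧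
      (∀ c ∈ cells, c.1 ≠ [] ∧ evalWord f c.1 = 1) ∧
      (cells.map fun c => c.1.length).sum ≤ (L.map fun c => c.2.length).sum := by
  intro N
  induction N with
  | zero =>
    intro L e hlen hL he hβ
    have hLnil : L = [] := List.eq_nil_of_length_eq_zero (Nat.le_zero.mp hlen)
    subst hLnil
    exact main_base f C j e he hβ
  | succ N ih =>
    intro L e hlen hL he hβ
    by_cases hnil : L = []
    · subst hnil; exact main_base f C j e he hβ
    by_cases hA : ∃ c ∈ L, evalWord f c.2 = 1
    · obtain ⟨c, hcmem, hce⟩ := hA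
      obtain ⟨L₁, L₂, rfl⟩ := List.append_of_mem hcmem
      have hc1H : c.1 ∈ HH (X := X) C j := (hL c hcmem).1
      set P : FG X C := (L₁.map fun c => c.1 * Phi C c.2).prod with hP
      cases L₂ with
      | nil =>
        have key : gval C (L₁ ++ [c]) e
            = (P * c.1) * Phi C c.2 * (P * c.1)⁻¹ * gval C L₁ (c.1 * e) := by
          rw [gval_append, gval_cons, gval_nil]
          rw [show gval C L₁ (c.1 * e) = P * (c.1 * e) from rfl]
          rw [hP]
          group
        have hβ' : beta f C j (gval C L₁ (c.1 * e)) = 1 := by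
          have h2 : gval C L₁ (c.1 * e)
              = ((P * c.1) * Phi C c.2 * (P * c.1)⁻¹)⁻¹ * gval C (L₁ ++ [c]) e := by
            rw [key]; group
          rw [h2, map_mul, hβ, mul_one, map_inv, map_mul, map_mul, beta_Phi, hce, map_one,
            mul_one]
          simp only [map_mul, map_inv, map_zpow]
          group
        obtain ⟨cells, hprod, hcond, hsum⟩ := ih L₁ (c.1 * e)
          (by have := hlen; simp only [List.length_append, List.length_cons] at this ⊢; omega)
          (fun d hd => hL d (List.mem_append_left _ hd))
          (Subgroup.mul_mem _ hc1H he) hβ'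
        refine ⟨(c.2, P * c.1) :: cells, ?_, ?_, ?_⟩
        · rw [key, hprod]; simp [mul_assoc]
        · intro d hd
          rcases List.mem_cons.mp hd with rfl | hd
          · exact ⟨(hL c hcmem).2, hce⟩
          · exact hcond d hd
        · simp only [List.map_cons, List.sum_cons, List.map_append, List.sum_append,
            List.map_cons, List.sum_cons] at hsum ⊢
          omega
      | cons d L₂' =>
        have hdH := hL d (by simp)
        have key : gval C (L₁ ++ c :: d :: L₂') e
            = (P * c.1) * Phi C c.2 * (P * c.1)⁻¹ *
              gval C (L₁ ++ (c.1 * d.1, d.2) :: L₂') e := by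
          rw [gval_append, gval_cons, gval_cons, gval_append, gval_cons]
          rw [hP]
          group
        have hβ' : beta f C j (gval C (L₁ ++ (c.1 * d.1, d.2) :: L₂') e) = 1 := by
          have h2 : gval C (L₁ ++ (c.1 * d.1, d.2) :: L₂') e
              = ((P * c.1) * Phi C c.2 * (P * c.1)⁻¹)⁻¹ * gval C (L₁ ++ c :: d :: L₂') e := by
            rw [key]; group
          rw [h2, map_mul, hβ, mul_one, map_inv, map_mul, map_mul, beta_Phi, hce, map_one,
            mul_one]
          simp only [map_mul, map_inv, map_zpow]
          group
        obtain ⟨cells, hprod, hcond, hsum⟩ := ih (L₁ ++ (c.1 * d.1, d.2) :: L₂') e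
          (by have := hlen; simp only [List.length_append, List.length_cons] at this ⊢; omega)
          (by
            intro x hx
            rcases List.mem_append.mp hx with hx | hx
            · exact hL x (List.mem_append_left _ hx)
            · rcases List.mem_cons.mp hx with rfl | hx
              · exact ⟨Subgroup.mul_mem _ hc1H hdH.1, hdH.2⟩
              · exact hL x (by simp [hx]))
          he hβ'
        refine ⟨(c.2, P * c.1) :: cells, ?_, ?_, ?_⟩
        · rw [key, hprod]; simp [mul_assoc]
        · intro x hx
          rcases List.mem_cons.mp hx with rfl | hx
          · exact ⟨(hL c hcmem).2, hce⟩
          · exact hcond x hx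
        · simp only [List.map_cons, List.sum_cons, List.map_append, List.sum_append,
            List.map_cons, List.sum_cons] at hsum ⊢
          omega
    by_cases hB : ∃ c ∈ L.tail, c.1 = 1
    · rcases L with _ | ⟨hd, tl⟩
      · exact absurd rfl hnil
      obtain ⟨c, hcmem, hc1⟩ := hB
      obtain ⟨t₁, t₂, rfl⟩ := List.append_of_mem hcmem
      obtain ⟨K, b, hKb⟩ : ∃ K b, hd :: (t₁ ++ c :: t₂) = K ++ b :: c :: t₂ := by
        rcases List.eq_nil_or_concat t₁ with rfl | ⟨t₁', b, rfl⟩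
        · exact ⟨[], hd, by simp⟩
        · exact ⟨hd :: t₁', b, by simp [List.concat_eq_append]⟩
      rw [hKb] at hlen hL hβ ⊢
      have hgg : gval C (K ++ b :: c :: t₂) e = gval C (K ++ (b.1, b.2 ++ c.2) :: t₂) e := by
        rw [gval_append, gval_append, gval_cons, gval_cons, gval_cons, hc1, Phi_append]
        group
      rw [hgg] at hβ
      obtain ⟨cells, hprod, hcond, hsum⟩ := ih (K ++ (b.1, b.2 ++ c.2) :: t₂) e
        (by simp only [List.length_append, List.length_cons] at hlen ⊢; omega)
        (by
          intro x hx
          rcases List.mem_append.mp hx with hx | hx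
          · exact hL x (List.mem_append_left _ hx)
          · rcases List.mem_cons.mp hx with rfl | hx
            · have hb := hL b (by simp)
              exact ⟨hb.1, by simp [hb.2]⟩
            · exact hL x (by simp [hx]))
        he hβ
      refine ⟨cells, by rw [hgg, hprod], hcond, ?_⟩
      simp only [List.map_append, List.sum_append, List.map_cons, List.sum_cons,
        List.length_append] at hsum ⊢
      omega
    · exfalso
      push_neg at hA hB
      have hbg := beta_gval f C j L e (fun c hc => (hL c hc).1) he
      rw [hβ] at hbg
      exact case_c f C L e hnil hA hB hbg.symm

end Stair

/-! ### Building a staircase from a word -/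

section Build

variable (f : X → R) (C : ℕ) (j : Fin C)

/-- prepend a group element to a staircase. -/
def prependG (y : FG X C) :
    List (FG X C × List ((X ⊕ X) × Bool)) × FG X C →
      List (FG X C × List ((X ⊕ X) × Bool)) × FG X C
  | ([], e) => ([], y * e)
  | (c :: tl, e) => ((y * c.1, c.2) :: tl, e)

lemma gval_prependG (y : FG X C) (S : List (FG X C × List ((X ⊕ X) × Bool)) × FG X C) :
    gval C (prependG C y S).1 (prependG C y S).2 = y * gval C S.1 S.2 := by
  obtain ⟨L, e⟩ := S
  cases L with
  | nil => simp [prependG, gval_nil]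
  | cons c tl => simp [prependG, gval_cons, mul_assoc]

lemma prependG_fst_sum (y : FG X C) (S : List (FG X C × List ((X ⊕ X) × Bool)) × FG X C) :
    ((prependG C y S).1.map fun c => c.2.length).sum = (S.1.map fun c => c.2.length).sum := by
  obtain ⟨L, e⟩ := S
  cases L with
  | nil => simp [prependG]
  | cons c tl => simp [prependG]

lemma prependG_inv (y : FG X C) (hy : y ∈ HH (X := X) C j)
    (S : List (FG X C × List ((X ⊕ X) × Bool)) × FG X C)
    (h1 : ∀ c ∈ S.1, c.1 ∈ HH (X := X) C j ∧ c.2 ≠ []) (h2 : S.2 ∈ HH (X := X) C j) :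
    (∀ c ∈ (prependG C y S).1, c.1 ∈ HH (X := X) C j ∧ c.2 ≠ []) ∧
      (prependG C y S).2 ∈ HH (X := X) C j := by
  obtain ⟨L, e⟩ := S
  cases L with
  | nil => exact ⟨by simp [prependG], Subgroup.mul_mem _ hy h2⟩
  | cons c tl =>
    refine ⟨?_, h2⟩
    intro d hd
    rcases List.mem_cons.mp hd with rfl | hd
    · exact ⟨Subgroup.mul_mem _ hy (h1 c (by simp)).1, (h1 c (by simp)).2⟩
    · exact h1 d (List.mem_cons_of_mem _ hd)

/-- the staircase associated to a word over `Y_C ∪ Y_C⁻¹`. -/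
def stairOf : List ((Fin C × (X ⊕ X)) × Bool) →
    List (FG X C × List ((X ⊕ X) × Bool)) × FG X C
  | [] => ([], 1)
  | p :: rest =>
    if p.1.1 = j then
      if p.2 then
        (((UU C j p.1.2)⁻¹, [(p.1.2, true)]) ::
            (prependG C (QQ C j p.1.2)⁻¹ (stairOf rest)).1,
          (prependG C (QQ C j p.1.2)⁻¹ (stairOf rest)).2)
      else
        ((QQ C j p.1.2, [(p.1.2, false)]) ::
            (prependG C (UU C j p.1.2) (stairOf rest)).1,
          (prependG C (UU C j p.1.2) (stairOf rest)).2)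
    else
      prependG C (if p.2 then FreeGroup.of p.1 else (FreeGroup.of p.1)⁻¹) (stairOf rest)

lemma mk_cons (p : (Fin C × (X ⊕ X)) × Bool) (rest : List ((Fin C × (X ⊕ X)) × Bool)) :
    FreeGroup.mk (p :: rest) =
      (if p.2 then FreeGroup.of p.1 else (FreeGroup.of p.1)⁻¹) * FreeGroup.mk rest := by
  obtain ⟨a, δ⟩ := p
  cases δ
  · have h1 : (FreeGroup.of a)⁻¹ = FreeGroup.mk [(a, false)] := by
      rw [show FreeGroup.of a = FreeGroup.mk [(a, true)] from rfl, FreeGroup.inv_mk]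
      simp [FreeGroup.invRev]
    simp only [if_neg Bool.false_ne_true, h1, FreeGroup.mul_mk]
    rfl
  · rw [if_pos rfl, show FreeGroup.of a = FreeGroup.mk [(a, true)] from rfl, FreeGroup.mul_mk]
    rfl

lemma of_row_eq (i : X ⊕ X) :
    FreeGroup.of ((j, i) : Fin C × (X ⊕ X)) = (UU C j i)⁻¹ * blockA' C i * (QQ C j i)⁻¹ := by
  rw [block_split C j i]
  group

lemma gval_stairOf : ∀ w : List ((Fin C × (X ⊕ X)) × Bool),
    gval C (stairOf C j w).1 (stairOf C j w).2 = FreeGroup.mk w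
  | [] => by
    show gval C [] 1 = FreeGroup.mk []
    rw [gval_nil]
    rfl
  | p :: rest => by
    obtain ⟨a, δ⟩ := p
    rw [mk_cons, ← gval_stairOf rest]
    by_cases ha : a.1 = j
    · have hpair : a = (j, a.2) := by rw [← ha]
      cases δ
      · simp only [stairOf, ha, if_true, Bool.false_eq_true, if_false]
        rw [gval_cons, gval_prependG]
        simp only [Phi_cons, Phi_nil, blockPow, Bool.false_eq_true, if_false, mul_one]
        conv_rhs => rw [hpair]
        rw [of_row_eq]
        group
      · simp only [stairOf, ha, if_true]
        rw [gval_cons, gval_prependG]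
        simp only [Phi_cons, Phi_nil, blockPow, if_true, mul_one]
        conv_rhs => rw [hpair]
        rw [of_row_eq]
        group
    · simp only [stairOf, ha, if_false]
      rw [gval_prependG]

lemma stairOf_inv : ∀ w : List ((Fin C × (X ⊕ X)) × Bool),
    (∀ c ∈ (stairOf C j w).1, c.1 ∈ HH (X := X) C j ∧ c.2 ≠ []) ∧
      (stairOf C j w).2 ∈ HH (X := X) C j
  | [] => ⟨by simp [stairOf], Subgroup.one_mem _⟩
  | p :: rest => by
    obtain ⟨a, δ⟩ := p
    have ih := stairOf_inv rest
    by_cases ha : a.1 = j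
    · cases δ
      · have hpre := prependG_inv C j (UU C j a.2) (UU_mem C j a.2) (stairOf C j rest)
          ih.1 ih.2
        simp only [stairOf, ha, if_true, Bool.false_eq_true, if_false]
        refine ⟨?_, hpre.2⟩
        intro c hc
        rcases List.mem_cons.mp hc with rfl | hc
        · exact ⟨QQ_mem C j a.2, by simp⟩
        · exact hpre.1 c hc
      · have hpre := prependG_inv C j (QQ C j a.2)⁻¹ (Subgroup.inv_mem _ (QQ_mem C j a.2))
          (stairOf C j rest) ih.1 ih.2
        simp only [stairOf, ha, if_true]
        refine ⟨?_, hpre.2⟩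
        intro c hc
        rcases List.mem_cons.mp hc with rfl | hc
        · exact ⟨Subgroup.inv_mem _ (UU_mem C j a.2), by simp⟩
        · exact hpre.1 c hc
    · simp only [stairOf, ha, if_false]
      refine prependG_inv C j _ ?_ (stairOf C j rest) ih.1 ih.2
      cases δ
      · simp only [Bool.false_eq_true, if_false]
        exact Subgroup.inv_mem _ (of_mem_HH C j a ha)
      · simp only [if_true]
        exact of_mem_HH C j a ha

/-- number of letters in row `j`. -/
def cnt (w : List ((Fin C × (X ⊕ X)) × Bool)) : ℕ :=
  List.countP (fun p => decide (p.1.1 = j)) w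

lemma stairOf_sum : ∀ w : List ((Fin C × (X ⊕ X)) × Bool),
    ((stairOf C j w).1.map fun c => c.2.length).sum = cnt C j w
  | [] => by simp [stairOf, cnt]
  | p :: rest => by
    obtain ⟨a, δ⟩ := p
    have ih := stairOf_sum rest
    have hcnt : cnt C j ((a, δ) :: rest) = cnt C j rest + (if a.1 = j then 1 else 0) := by
      simp only [cnt, List.countP_cons]
      by_cases ha : a.1 = j <;> simp [ha]
    rw [hcnt]
    by_cases ha : a.1 = j
    · cases δ
      · simp only [stairOf, ha, if_true, Bool.false_eq_true, if_false]
        simp only [List.map_cons, List.sum_cons, prependG_fst_sum, ih]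
        simp [ha]
        omega
      · simp only [stairOf, ha, if_true]
        simp only [List.map_cons, List.sum_cons, prependG_fst_sum, ih]
        simp [ha]
        omega
    · simp only [stairOf, ha, if_false]
      rw [prependG_fst_sum, ih]
      simp [ha]

lemma sum_cnt (w : List ((Fin C × (X ⊕ X)) × Bool)) :
    (Finset.univ : Finset (Fin C)).sum (fun j => cnt C j w) = w.length := by
  induction w with
  | nil => simp [cnt]
  | cons p rest ih =>
    simp only [cnt, List.countP_cons] at ih ⊢
    rw [Finset.sum_add_distrib, ih]
    have : ((Finset.univ : Finset (Fin C)).sum fun j =>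
        if (decide (p.1.1 = j)) = true then 1 else 0) = 1 := by
      simp only [decide_eq_true_eq]
      rw [Finset.sum_ite_eq (Finset.univ : Finset (Fin C)) p.1.1 (fun _ => 1)]
      simp
    rw [this]
    simp [List.length_cons]

lemma exists_row (hC : 1 ≤ C) (w : List ((Fin C × (X ⊕ X)) × Bool)) :
    ∃ j : Fin C, C * cnt C j w ≤ w.length := by
  obtain ⟨j, _, hmin⟩ := Finset.exists_min_image (Finset.univ : Finset (Fin C))
    (fun j => cnt C j w) ⟨⟨0, hC⟩, Finset.mem_univ _⟩
  refine ⟨j, ?_⟩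
  calc C * cnt C j w = (Finset.univ : Finset (Fin C)).card • cnt C j w := by
        simp [Finset.card_univ, smul_eq_mul]
    _ ≤ (Finset.univ : Finset (Fin C)).sum (fun j' => cnt C j' w) :=
        Finset.card_nsmul_le_sum _ _ _ (fun x hx => hmin x hx)
    _ = w.length := sum_cnt C w

end Build

/-! ### Converting cells into relators -/

section Cells

variable (f : X → R) (C : ℕ)

lemma conj_list_prod {G β : Type*} [Group G] (h : G) (F : β → G) (l : List β) :
    (l.map fun t => h * F t * h⁻¹).prod = h * (l.map F).prod * h⁻¹ := by
  induction l with
  | nil => simp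
  | cons g tl ih => simp only [List.map_cons, List.prod_cons, ih]; group

/-- the conjugated relator associated to a triple `(s, ε, h)`. -/
def tripConj (t : List (X ⊕ X) × Bool × FG X C) : FG X C :=
  t.2.2 * bpow (relC C t.1) t.2.1 * t.2.2⁻¹

lemma relC_append (s₁ s₂ : List (X ⊕ X)) :
    relC (X := X) C (s₁ ++ s₂) = relC C s₁ * relC C s₂ := by
  simp [relC]

lemma evalWord_append (l₁ l₂ : List ((X ⊕ X) × Bool)) :
    evalWord f (l₁ ++ l₂) = evalWord f l₁ * evalWord f l₂ := by
  simp [evalWord]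

/-- positivization of a word over `Y ∪ Y⁻¹`. -/
def posify (v : List ((X ⊕ X) × Bool)) : List (X ⊕ X) :=
  v.map fun p => if p.2 then p.1 else Sum.swap p.1

@[simp] lemma posify_length (v : List ((X ⊕ X) × Bool)) : (posify v).length = v.length := by
  simp [posify]

lemma eval_posify (v : List ((X ⊕ X) × Bool)) :
    evalWord f ((posify v).map fun a => (a, true)) = evalWord f v := by
  induction v with
  | nil => simp [posify]
  | cons p tl ih =>
    simp only [posify, List.map_cons, evalWord_cons, if_true] at ih ⊢
    rw [ih]
    congr 1
    cases hp : p.2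
    · simp only [Bool.false_eq_true, if_false]
      exact rho_swap f p.1
    · simp only [if_true]

lemma peel (v : List ((X ⊕ X) × Bool)) :
    ∃ rl : List (List (X ⊕ X) × Bool × FG X C),
      Phi C v = (rl.map (tripConj C)).prod * relC C (posify v) ∧
      rl.length = v.countP (fun p => !p.2) ∧
      ∀ t ∈ rl, t.1.length = 2 ∧ evalWord f (t.1.map fun a => (a, true)) = 1 := by
  induction v with
  | nil => exact ⟨[], by simp [posify, relC], by simp, by simp⟩
  | cons p tl ih =>
    obtain ⟨rl, h1, h2, h3⟩ := ih
    obtain ⟨a, δ⟩ := p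
    cases δ
    · -- negative letter
      refine ⟨([Sum.swap a, a], false, (1 : FG X C)) ::
          rl.map (fun t => (t.1, t.2.1, blockA' C (Sum.swap a) * t.2.2)), ?_, ?_, ?_⟩
      · have hshift : ((rl.map fun t => (t.1, t.2.1, blockA' C (Sum.swap a) * t.2.2)).map
            (tripConj C)).prod = blockA' C (Sum.swap a) * (rl.map (tripConj C)).prod *
              (blockA' C (Sum.swap a))⁻¹ := by
          rw [List.map_map]
          rw [show (tripConj C ∘ fun t => (t.1, t.2.1, blockA' C (Sum.swap a) * t.2.2)) =
            fun t => blockA' C (Sum.swap a) * tripConj C t * (blockA' C (Sum.swap a))⁻¹ by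
              funext t
              simp only [Function.comp_apply, tripConj]
              group]
          exact conj_list_prod _ _ _
        rw [Phi_cons, h1]
        simp only [List.map_cons, List.prod_cons, hshift]
        have hhead : tripConj C ([Sum.swap a, a], false, (1 : FG X C)) =
            (blockA' C (Sum.swap a) * blockA' C a)⁻¹ := by
          simp [tripConj, bpow, relC]
        rw [hhead]
        have hpos : posify ((a, false) :: tl) = Sum.swap a :: posify tl := by
          simp [posify]
        rw [hpos, relC_cons]
        simp only [blockPow, Bool.false_eq_true, if_false]
        group
      · simp only [List.length_cons, List.length_map, List.countP_cons]
        simp [h2]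
      · intro t ht
        rcases List.mem_cons.mp ht with rfl | ht
        · refine ⟨rfl, ?_⟩
          simp only [List.map_cons, List.map_nil, evalWord_cons, evalWord_nil, if_true]
          rw [rho_swap f a]
          simp
        · obtain ⟨t', ht', rfl⟩ := List.mem_map.mp ht
          exact h3 t' ht'
    · -- positive letter
      refine ⟨rl.map (fun t => (t.1, t.2.1, blockA' C a * t.2.2)), ?_, ?_, ?_⟩
      · have hshift : ((rl.map fun t => (t.1, t.2.1, blockA' C a * t.2.2)).map
            (tripConj C)).prod = blockA' C a * (rl.map (tripConj C)).prod *
              (blockA' C a)⁻¹ := by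
          rw [List.map_map]
          rw [show (tripConj C ∘ fun t => (t.1, t.2.1, blockA' C a * t.2.2)) =
            fun t => blockA' C a * tripConj C t * (blockA' C a)⁻¹ by
              funext t
              simp only [Function.comp_apply, tripConj]
              group]
          exact conj_list_prod _ _ _
        rw [Phi_cons, h1, hshift]
        have hpos : posify ((a, true) :: tl) = a :: posify tl := by simp [posify]
        rw [hpos, relC_cons]
        simp only [blockPow, if_true]
        group
      · simp only [List.length_map, List.countP_cons]
        simp [h2]
      · intro t ht
        obtain ⟨t', ht', rfl⟩ := List.mem_map.mp ht
        exact h3 t' ht'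

lemma all_neg_phi (v : List ((X ⊕ X) × Bool)) (hneg : ∀ p ∈ v, p.2 = false) :
    Phi C v = (relC C ((v.map Prod.fst).reverse))⁻¹ := by
  induction v with
  | nil => simp [relC]
  | cons p tl ih =>
    have hp : p.2 = false := hneg p (by simp)
    rw [Phi_cons]
    rw [ih (fun q hq => hneg q (List.mem_cons_of_mem _ hq))]
    simp only [List.map_cons, List.reverse_cons, relC_append]
    simp only [blockPow, hp, Bool.false_eq_true, if_false]
    simp [relC, mul_inv_rev]

lemma all_neg_eval (v : List ((X ⊕ X) × Bool)) (hneg : ∀ p ∈ v, p.2 = false) :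
    evalWord f ((((v.map Prod.fst).reverse)).map fun a => (a, true)) = (evalWord f v)⁻¹ := by
  induction v with
  | nil => simp
  | cons p tl ih =>
    have hp : p.2 = false := hneg p (by simp)
    simp only [List.map_cons, List.reverse_cons, List.map_append, evalWord_append,
      evalWord_cons, hp, Bool.false_eq_true, if_false]
    rw [ih (fun q hq => hneg q (List.mem_cons_of_mem _ hq))]
    simp [mul_inv_rev]

lemma cell (v : List ((X ⊕ X) × Bool)) (hv : v ≠ []) (hev : evalWord f v = 1) :
    ∃ rl : List (List (X ⊕ X) × Bool × FG X C),
      Phi C v = (rl.map (tripConj C)).prod ∧ rl.length ≤ v.length ∧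
      ∀ t ∈ rl, t.1 ≠ [] ∧ evalWord f (t.1.map fun a => (a, true)) = 1 ∧
        (t.1.length = 2 ∨ t.1.length ≤ v.length) := by
  by_cases hpos : ∃ p ∈ v, p.2 = true
  · obtain ⟨rl, h1, h2, h3⟩ := peel f C v
    refine ⟨rl ++ [(posify v, true, (1 : FG X C))], ?_, ?_, ?_⟩
    · rw [h1]
      simp only [List.map_append, List.prod_append, List.map_cons, List.map_nil,
        List.prod_cons, List.prod_nil]
      have : tripConj C (posify v, true, (1 : FG X C)) = relC C (posify v) := by
        simp [tripConj, bpow]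
      rw [this]
      simp
    · have hlt : v.countP (fun p => !p.2) < v.length := by
        rcases Nat.lt_or_ge (v.countP (fun p => !p.2)) v.length with h | h
        · exact h
        · exfalso
          have hle := List.countP_le_length (l := v) (p := fun p => !p.2)
          have heq : v.countP (fun p => !p.2) = v.length := le_antisymm hle h
          rw [List.countP_eq_length] at heq
          obtain ⟨p, hp, hp2⟩ := hpos
          have := heq p hp
          rw [hp2] at this
          simp at this
      simp only [List.length_append, List.length_cons, List.length_nil, h2]
      omega
    · intro t ht
      rcases List.mem_append.mp ht with ht | ht
      · obtain ⟨hlen2, heval⟩ := h3 t ht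
        exact ⟨by intro h; rw [h] at hlen2; simp at hlen2, heval, Or.inl hlen2⟩
      · simp only [List.mem_singleton] at ht
        subst ht
        refine ⟨by simpa [posify] using hv, ?_, Or.inr (by simp)⟩
        rw [eval_posify f v, hev]
  · push_neg at hpos
    have hneg : ∀ p ∈ v, p.2 = false := by
      intro p hp
      cases h : p.2
      · rfl
      · exact absurd h (hpos p hp)
    refine ⟨[((v.map Prod.fst).reverse, false, (1 : FG X C))], ?_, ?_, ?_⟩
    · rw [all_neg_phi C v hneg]
      simp [tripConj, bpow]
    · simpa [Nat.one_le_iff_ne_zero, Nat.pos_iff_ne_zero] using List.length_pos_iff.mpr hv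
    · intro t ht
      simp only [List.mem_singleton] at ht
      subst ht
      refine ⟨by simpa using hv, ?_, Or.inr (by simp)⟩
      rw [all_neg_eval f v hneg, hev]
      simp

lemma flatten (cells : List (List ((X ⊕ X) × Bool) × FG X C))
    (hc : ∀ c ∈ cells, c.1 ≠ [] ∧ evalWord f c.1 = 1) :
    ∃ rels : List (List (X ⊕ X) × Bool × FG X C),
      (cells.map fun c => c.2 * Phi C c.1 * c.2⁻¹).prod = (rels.map (tripConj C)).prod ∧
      rels.length ≤ (cells.map fun c => c.1.length).sum ∧
      ∀ t ∈ rels, t.1 ≠ [] ∧ evalWord f (t.1.map fun a => (a, true)) = 1 ∧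
        (t.1.length = 2 ∨ t.1.length ≤ (cells.map fun c => c.1.length).sum) := by
  induction cells with
  | nil => exact ⟨[], by simp, by simp, by simp⟩
  | cons c tl ih =>
    obtain ⟨rels_tl, g1, g2, g3⟩ := ih (fun d hd => hc d (List.mem_cons_of_mem _ hd))
    obtain ⟨rl, h1, h2, h3⟩ := cell f C c.1 (hc c (by simp)).1 (hc c (by simp)).2
    refine ⟨rl.map (fun t => (t.1, t.2.1, c.2 * t.2.2)) ++ rels_tl, ?_, ?_, ?_⟩
    · simp only [List.map_cons, List.prod_cons, List.map_append, List.prod_append, ← g1]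
      congr 1
      rw [List.map_map]
      rw [show (tripConj C ∘ fun t => (t.1, t.2.1, c.2 * t.2.2)) =
        fun t => c.2 * tripConj C t * c.2⁻¹ by
          funext t
          simp only [Function.comp_apply, tripConj]
          group]
      rw [conj_list_prod, ← h1]
    · simp only [List.length_append, List.length_map, List.map_cons, List.sum_cons]
      omega
    · intro t ht
      rcases List.mem_append.mp ht with ht | ht
      · obtain ⟨t', ht', rfl⟩ := List.mem_map.mp ht
        obtain ⟨k1, k2, k3⟩ := h3 t' ht'
        refine ⟨k1, k2, ?_⟩
        rcases k3 with k3 | k3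
        · exact Or.inl k3
        · refine Or.inr ?_
          simp only [List.map_cons, List.sum_cons]
          omega
      · obtain ⟨k1, k2, k3⟩ := g3 t ht
        refine ⟨k1, k2, ?_⟩
        rcases k3 with k3 | k3
        · exact Or.inl k3
        · refine Or.inr ?_
          simp only [List.map_cons, List.sum_cons]
          omega

end Cells

end S19

/-- **Lemma 14.2.** For every word `w` over `Y_C ∪ Y_C⁻¹` representing the identity of
`R_C = ⟨Y_C | S_C⟩`, there exist `m₀` with `C·m₀ ≤ ‖w‖`, relators `r_i = (s_i)_C ∈ S_C`
(for nonempty positive words `s_i` over `Y` representing `1` in `R`) with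
`‖r_i‖ = C·‖s_i‖ ≤ 2‖w‖`, signs `ε_i` and elements `g_i ∈ F(Y_C)`, such that
`w = g₁ r₁^{ε₁} g₁⁻¹ ⋯ g_{m₀} r_{m₀}^{ε_{m₀}} g_{m₀}⁻¹` in `F(Y_C)`. -/
theorem statement19 {X : Type} [Fintype X] {R : Type} [Group R] (f : X → R)
    (hgen : Subgroup.closure (Set.range f) = ⊤)
    (C : ℕ) (hC : 1 ≤ C)
    (w : List ((Fin C × (X ⊕ X)) × Bool))
    (hw1 : FreeGroup.mk w ∈ Subgroup.normalClosure
      {r : FreeGroup (Fin C × (X ⊕ X)) | ∃ s : List (X ⊕ X), s ≠ [] ∧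
        evalWord f (s.map fun a => (a, true)) = 1 ∧ relC C s = r}) :
    ∃ (m₀ : ℕ) (s : Fin m₀ → List (X ⊕ X)) (ε : Fin m₀ → Bool)
      (g : Fin m₀ → FreeGroup (Fin C × (X ⊕ X))),
      C * m₀ ≤ w.length ∧
      (∀ i, s i ≠ [] ∧ evalWord f ((s i).map fun a => (a, true)) = 1 ∧
        C * (s i).length ≤ 2 * w.length) ∧
      FreeGroup.mk w =
        (List.ofFn fun i => g i * bpow (relC C (s i)) (ε i) * (g i)⁻¹).prod := by
  classical
  obtain ⟨j, hj⟩ := S19.exists_row C hC w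
  have hker : FreeGroup.mk w ∈ (S19.beta f C j).ker := by
    refine Subgroup.normalClosure_le_normal ?_ hw1
    rintro r ⟨s, hs0, hs1, rfl⟩
    simp only [SetLike.mem_coe, MonoidHom.mem_ker]
    rw [S19.relC_eq_Phi, S19.beta_Phi, hs1, map_one]
  rw [MonoidHom.mem_ker] at hker
  have hβ : S19.beta f C j (S19.gval C (S19.stairOf C j w).1 (S19.stairOf C j w).2) = 1 := by
    rw [S19.gval_stairOf]
    exact hker
  obtain ⟨cells, hprod, hcond, hsum⟩ := S19.main_ind f C j (S19.stairOf C j w).1.length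
    (S19.stairOf C j w).1 (S19.stairOf C j w).2 le_rfl (S19.stairOf_inv C j w).1
    (S19.stairOf_inv C j w).2 hβ
  rw [S19.gval_stairOf] at hprod
  rw [S19.stairOf_sum] at hsum
  obtain ⟨rels, k1, k2, k3⟩ := S19.flatten f C cells hcond
  have hm : C * rels.length ≤ w.length := by
    calc C * rels.length ≤ C * S19.cnt C j w := Nat.mul_le_mul_left C (le_trans k2 hsum)
      _ ≤ w.length := hj
  have hCn : ∀ t ∈ rels, C * t.1.length ≤ 2 * w.length := by
    intro t ht
    have hne : rels ≠ [] := by rintro rfl; exact absurd ht List.not_mem_nil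
    have h1le : 1 ≤ rels.length := List.length_pos_iff.mpr hne
    have hcnt1 : 1 ≤ S19.cnt C j w := le_trans h1le (le_trans k2 hsum)
    have hCw : C ≤ w.length := by
      calc C = C * 1 := (mul_one C).symm
        _ ≤ C * S19.cnt C j w := Nat.mul_le_mul_left C hcnt1
        _ ≤ w.length := hj
    obtain ⟨_, _, hlen⟩ := k3 t ht
    rcases hlen with h | h
    · rw [h]; omega
    · have hx : C * t.1.length ≤ C * S19.cnt C j w :=
        Nat.mul_le_mul_left C (le_trans h hsum)
      omega
  refine ⟨rels.length, fun i => (rels.get i).1, fun i => (rels.get i).2.1,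
    fun i => (rels.get i).2.2, hm, ?_, ?_⟩
  · intro i
    have hmem : rels.get i ∈ rels := List.get_mem rels i
    obtain ⟨k1', k2', _⟩ := k3 _ hmem
    exact ⟨k1', k2', hCn _ hmem⟩
  · rw [hprod, k1]
    have hofn : (List.ofFn fun i => (rels.get i).2.2 * bpow (relC C (rels.get i).1)
        ((rels.get i).2.1) * ((rels.get i).2.2)⁻¹) = rels.map (S19.tripConj C) := by
      have h0 : rels.map (S19.tripConj C) = (List.ofFn rels.get).map (S19.tripConj C) := by
        rw [List.ofFn_get]
      rw [h0, List.map_ofFn]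
      rfl
    rw [hofn]
end
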